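/- arXiv:2003.08644 — 5 statements merged into one kernel-verified Lean document; each statement's English description precedes it below -/
import Mathlib

section
/- A form η ∈ Λ^{p,p}V* is real if and only if the associated sesquilinear form |η| on Λ^p V_ℂ is Hermitian; and η is a positive form if and only if |η| is a positive semidefinite Hermitian form. -/
/- Setup: `V = ℝⁿ` with its standard basis, `V_ℂ` its complexification,
`V* = Hom_ℝ(V,ℂ)` and `V̄*` the antilinear maps `V_ℂ → ℂ`.  The bigraded exterior algebra
`Λ^{·,·}V* = Λ_ℂ(V* ⊕ V̄*)` is modeled as the exterior algebra over `ℂ` of the free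
complex module on the `2n` generators `du_1,…,du_n` (first summand) and
`dū_1,…,dū_n` (second summand). -/

noncomputable section
open ExteriorAlgebra

/-- The algebra `Λ^{·,·}V* = Λ_ℂ(V* ⊕ V̄*)` for `V = ℝⁿ`. -/
abbrev CForms (n : ℕ) : Type := ExteriorAlgebra ℂ ((Fin n ⊕ Fin n) → ℂ)

/-- The basis element `du_i` of `V*`. -/
def cdu {n : ℕ} (i : Fin n) : CForms n := ExteriorAlgebra.ι ℂ (Pi.single (Sum.inl i) (1 : ℂ))

/-- The basis element `dū_i` of `V̄*`. -/
def cdub {n : ℕ} (i : Fin n) : CForms n := ExteriorAlgebra.ι ℂ (Pi.single (Sum.inr i) (1 : ℂ))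

/-- A general element `Σ cᵢ • du_i` of `V*`. -/
def cOne {n : ℕ} (c : Fin n → ℂ) : CForms n := ∑ i, c i • cdu i

/-- A general element `Σ cᵢ • dū_i` of `V̄*`. -/
def cOneBar {n : ℕ} (c : Fin n → ℂ) : CForms n := ∑ i, c i • cdub i

/-- The conjugate `ᾱ = Σ c̄ᵢ • dū_i ∈ V̄*` of the one-form `α = Σ cᵢ • du_i ∈ V*`. -/
def cConjOne {n : ℕ} (c : Fin n → ℂ) : CForms n := ∑ i, (starRingEnd ℂ) (c i) • cdub i

/-- A decomposable `(p,0)`-form `α₁ ∧ … ∧ α_p` with `α_j ∈ V*`. -/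
def cDecomp {n p : ℕ} (c : Fin p → Fin n → ℂ) : CForms n := (List.ofFn fun j => cOne (c j)).prod

/-- The conjugate `ᾱ₁ ∧ … ∧ ᾱ_p` of the decomposable `(p,0)`-form given by `c`. -/
def cDecompBar {n p : ℕ} (c : Fin p → Fin n → ℂ) : CForms n :=
  (List.ofFn fun j => cConjOne (c j)).prod

/-- `Λ^{p,q}V*`: the span of products of `p` elements of `V*` and `q` elements of `V̄*`. -/
def CFormsPQ (n p q : ℕ) : Submodule ℂ (CForms n) :=
  Submodule.span ℂ { x | ∃ (a : Fin p → Fin n → ℂ) (b : Fin q → Fin n → ℂ),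
    x = cDecomp a * (List.ofFn fun j => cOneBar (b j)).prod }

/-- The convex cone generated by a set `S` (nonnegative real coefficients). -/
def realCone {n : ℕ} (S : Set (CForms n)) : Set (CForms n) :=
  { x | ∃ (m : ℕ) (t : Fin m → ℝ) (y : Fin m → CForms n),
      (∀ k, 0 ≤ t k) ∧ (∀ k, y k ∈ S) ∧ x = ∑ k, (t k : ℂ) • y k }

/-- The generators `α₁ ∧ iᾱ₁ ∧ … ∧ α_p ∧ iᾱ_p` (`α_j ∈ V*`) of the strongly positive cone. -/
def cStrongGen (n p : ℕ) : Set (CForms n) :=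
  { x | ∃ c : Fin p → Fin n → ℂ,
      x = (List.ofFn fun j => cOne (c j) * (Complex.I • cConjOne (c j))).prod }

/-- The cone `Λ^{p,p}_{+,s}V*` of strongly positive `(p,p)`-forms. -/
def cStrongPos (n p : ℕ) : Set (CForms n) := realCone (cStrongGen n p)

/-- The generators `i^{p²} α ∧ ᾱ` (`α ∈ Λ^{p,0}V*`, written as a sum of decomposables)
of the positive cone. -/
def cPosGen (n p : ℕ) : Set (CForms n) :=
  { x | ∃ (m : ℕ) (c : Fin m → Fin p → Fin n → ℂ),
      x = Complex.I ^ (p ^ 2) • ((∑ l, cDecomp (c l)) * (∑ l, cDecompBar (c l))) }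

/-- The cone `Λ^{p,p}_{+}V*` of positive `(p,p)`-forms. -/
def cPos (n p : ℕ) : Set (CForms n) := realCone (cPosGen n p)

/-- The canonical orientation form `ω_n = du_1 ∧ i dū_1 ∧ … ∧ du_n ∧ i dū_n`. -/
def cOmegaTop (n : ℕ) : CForms n := (List.ofFn fun i : Fin n => cdu i * (Complex.I • cdub i)).prod

/-- The set `Λ^{p,p}_{+,w}V*` of weakly positive `(p,p)`-forms: `(p,p)`-forms `ω` such that
for every strongly positive `η` of type `(n-p,n-p)` there is a real `γ ≥ 0` with
`ω ∧ η = γ ω_n`. -/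
def cWeakPos (n p : ℕ) : Set (CForms n) :=
  { x | x ∈ CFormsPQ n p p ∧
      ∀ η ∈ cStrongPos n (n - p), ∃ γ : ℝ, 0 ≤ γ ∧ x * η = (γ : ℂ) • cOmegaTop n }

/-- `σ` is the complex conjugation of `Λ^{·,·}V*`: the (unique) antilinear multiplicative
involution of the ℝ-algebra `Λ^{·,·}V*` with `σ(du_i) = dū_i` and `σ(dū_i) = du_i`. -/
structure IsConjugation (n : ℕ) (σ : CForms n → CForms n) : Prop where
  map_add : ∀ x y, σ (x + y) = σ x + σ y
  map_smul : ∀ (c : ℂ) (x), σ (c • x) = (starRingEnd ℂ) c • σ x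
  map_mul : ∀ x y, σ (x * y) = σ x * σ y
  map_one : σ 1 = 1
  map_du : ∀ i : Fin n, σ (cdu i) = cdub i
  map_dub : ∀ i : Fin n, σ (cdub i) = cdu i

/-- `F` is the antilinear involution of the ℝ-algebra `Λ^{·,·}V*` determined by
`F(λ) = λ̄`, `F(du_i) = du_i` and `F(dū_i) = -dū_i`. -/
structure IsFInvolution (n : ℕ) (F : CForms n → CForms n) : Prop where
  map_add : ∀ x y, F (x + y) = F x + F y
  map_smul : ∀ (c : ℂ) (x), F (c • x) = (starRingEnd ℂ) c • F x
  map_mul : ∀ x y, F (x * y) = F x * F y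
  map_one : F 1 = 1
  map_du : ∀ i : Fin n, F (cdu i) = cdu i
  map_dub : ∀ i : Fin n, F (cdub i) = - cdub i

/-- Index type for the standard basis `e_I` of `Λ^p V_ℂ` (and the monomials `du_I`):
subsets of `{1,…,n}` of cardinality `p`. -/
abbrev IdxC (n p : ℕ) := {s : Finset (Fin n) // s.card = p}

/-- The monomial `du_I = du_{i₁} ∧ … ∧ du_{i_p}` for `I = {i₁ < … < i_p}`. -/
def cMonomial {n : ℕ} (p : ℕ) (I : IdxC n p) : CForms n :=
  (List.ofFn fun j => cdu (I.1.orderEmbOfFin I.2 j)).prod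

/-- The monomial `dū_J = dū_{j₁} ∧ … ∧ dū_{j_p}` for `J = {j₁ < … < j_p}`. -/
def cMonomialBar {n : ℕ} (p : ℕ) (J : IdxC n p) : CForms n :=
  (List.ofFn fun j => cdub (J.1.orderEmbOfFin J.2 j)).prod

namespace BGJK
variable {n p : ℕ}

/-- generator of the free module at index `s`. -/
def gv {n : ℕ} (s : Fin n ⊕ Fin n) : (Fin n ⊕ Fin n) → ℂ := Pi.single s 1

def genU (u : Fin n → Fin n ⊕ Fin n) (i : Fin n) : CForms n := ExteriorAlgebra.ι ℂ (gv (u i))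

lemma genU_inl (i : Fin n) : genU Sum.inl i = cdu i := rfl
lemma genU_inr (i : Fin n) : genU Sum.inr i = cdub i := rfl

def monoU (u : Fin n → Fin n ⊕ Fin n) (p : ℕ) (I : IdxC n p) : CForms n :=
  ExteriorAlgebra.ιMulti ℂ p fun j => gv (u (I.1.orderEmbOfFin I.2 j))

lemma monoU_inl (I : IdxC n p) : monoU Sum.inl p I = cMonomial p I := by
  rw [monoU, ιMulti_apply]; rfl

lemma monoU_inr (I : IdxC n p) : monoU Sum.inr p I = cMonomialBar p I := by
  rw [monoU, ιMulti_apply]; rfl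

def embU (u : Fin n → Fin n ⊕ Fin n) : (Fin n → ℂ) →ₗ[ℂ] ((Fin n ⊕ Fin n) → ℂ) :=
  ∑ i : Fin n, (LinearMap.proj i).smulRight (gv (u i))

lemma embU_apply (u : Fin n → Fin n ⊕ Fin n) (c : Fin n → ℂ) :
    embU u c = ∑ i, c i • gv (u i) := by
  simp [embU]

lemma embU_single (u : Fin n → Fin n ⊕ Fin n) (i : Fin n) :
    embU u (Pi.single i 1) = gv (u i) := by
  rw [embU_apply]
  rw [Finset.sum_eq_single i (fun b _ hb => by simp [Pi.single_apply, hb]) (by simp)]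
  simp

lemma ι_embU (u : Fin n → Fin n ⊕ Fin n) (c : Fin n → ℂ) :
    ExteriorAlgebra.ι ℂ (embU u c) = ∑ i, c i • genU u i := by
  rw [embU_apply, map_sum]
  simp [genU]

def AU (u : Fin n → Fin n ⊕ Fin n) (p : ℕ) : (Fin n → ℂ) [⋀^Fin p]→ₗ[ℂ] CForms n :=
  (ExteriorAlgebra.ιMulti ℂ p).compLinearMap (embU u)

def BU (u : Fin n → Fin n ⊕ Fin n) (p : ℕ) : (Fin n → ℂ) [⋀^Fin p]→ₗ[ℂ] CForms n :=
  ∑ I : IdxC n p, (LinearMap.toSpanSingleton ℂ (CForms n) (monoU u p I)).compAlternatingMap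
    ((Matrix.detRowAlternating (n := Fin p) (R := ℂ)).compLinearMap
      (LinearMap.funLeft ℂ ℂ (I.1.orderEmbOfFin I.2)))

lemma altSum_apply {R M N ι α : Type*} [CommSemiring R] [AddCommMonoid M] [AddCommMonoid N]
    [Module R M] [Module R N] (s : Finset α) (f : α → (M [⋀^ι]→ₗ[R] N)) (v : ι → M) :
    (∑ a ∈ s, f a) v = ∑ a ∈ s, f a v := by
  classical
  induction s using Finset.induction with
  | empty => simp
  | insert _ _ h ih => simp [Finset.sum_insert h, ih]

lemma BU_apply (u : Fin n → Fin n ⊕ Fin n) (v : Fin p → Fin n → ℂ) :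
    BU u p v = ∑ I : IdxC n p,
      (Matrix.det (Matrix.of fun j j' => v j (I.1.orderEmbOfFin I.2 j'))) • monoU u p I := by
  rw [BU, altSum_apply]
  refine Finset.sum_congr rfl fun I _ => ?_
  simp only [LinearMap.compAlternatingMap_apply, AlternatingMap.compLinearMap_apply,
    LinearMap.toSpanSingleton_apply]
  rfl

lemma AU_eq_BU (u : Fin n → Fin n ⊕ Fin n) (p : ℕ) : AU u p = BU (n := n) u p := by
  classical
  refine Module.Basis.ext_alternating (Pi.basisFun ℂ (Fin n)) fun v hv => ?_
  -- the image set
  set S : Finset (Fin n) := Finset.univ.image v with hS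
  have hcard : S.card = p := by
    rw [hS, Finset.card_image_of_injective _ hv, Finset.card_univ, Fintype.card_fin]
  set I₀ : IdxC n p := ⟨S, hcard⟩ with hI₀
  -- the permutation relating v to the sorted enumeration of S
  have hmemS : ∀ j, v j ∈ S := fun j => Finset.mem_image_of_mem v (Finset.mem_univ j)
  have hrange : ∀ x ∈ S, ∃ j, v j = x := by
    intro x hx
    rcases Finset.mem_image.1 hx with ⟨j, _, hj⟩
    exact ⟨j, hj⟩
  have hbij : Function.Bijective (fun j => (⟨v j, hmemS j⟩ : {x // x ∈ S})) := by
    constructor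
    · intro a b hab
      exact hv (by simpa using hab)
    · rintro ⟨x, hx⟩
      rcases hrange x hx with ⟨j, hj⟩
      exact ⟨j, by simpa using hj⟩
  let vE : Fin p ≃ {x // x ∈ S} := Equiv.ofBijective _ hbij
  let eS : Fin p ≃o {x // x ∈ S} := S.orderIsoOfFin hcard
  let τ : Equiv.Perm (Fin p) := vE.trans eS.toEquiv.symm
  have hτ : ∀ j, S.orderEmbOfFin hcard (τ j) = v j := by
    intro j
    have : eS (τ j) = vE j := by simp [τ]
    have h2 : ((eS (τ j) : {x // x ∈ S}) : Fin n) = v j := by rw [this]; rfl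
    exact h2
  -- evaluate AU
  have hA : (AU u p fun i => (Pi.basisFun ℂ (Fin n)) (v i)) =
      Equiv.Perm.sign τ • monoU u p I₀ := by
    have h1 : (AU u p fun i => (Pi.basisFun ℂ (Fin n)) (v i)) =
        ExteriorAlgebra.ιMulti ℂ p fun j => gv (u (v j)) := by
      simp only [AU, AlternatingMap.compLinearMap_apply, Pi.basisFun_apply]
      congr 1
      funext j
      exact embU_single u (v j)
    have h2 : (fun j => gv (u (v j))) =
        (fun j => gv (u (S.orderEmbOfFin hcard j))) ∘ τ := by
      funext j
      simp [Function.comp, hτ]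
    rw [h1, h2, AlternatingMap.map_perm]
    rfl
  rw [hA, BU_apply]
  -- evaluate BU: all terms except I₀ vanish
  rw [Finset.sum_eq_single I₀]
  · -- the I₀ term
    have hdet : (Matrix.of fun j j' =>
        (Pi.basisFun ℂ (Fin n)) (v j) (I₀.1.orderEmbOfFin I₀.2 j')).det
        = Equiv.Perm.sign τ := by
      have : (Matrix.of fun j j' =>
          (Pi.basisFun ℂ (Fin n)) (v j) (I₀.1.orderEmbOfFin I₀.2 j'))
          = fun j => (1 : Matrix (Fin p) (Fin p) ℂ) (τ j) := by
        funext j j'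
        have hvj : v j = S.orderEmbOfFin hcard (τ j) := (hτ j).symm
        simp only [Matrix.of_apply, Pi.basisFun_apply, Matrix.one_apply, Pi.single_apply]
        rw [hvj]
        by_cases h : τ j = j'
        · simp [h]; rfl
        · have : S.orderEmbOfFin hcard j' ≠ S.orderEmbOfFin hcard (τ j) := by
            intro hh
            exact h ((S.orderEmbOfFin hcard).injective hh).symm
          simp [h, this]; exact this
      have h3 : (Matrix.of fun j j' => (Pi.basisFun ℂ (Fin n)) (v j)
          (I₀.1.orderEmbOfFin I₀.2 j'))
          = Matrix.submatrix (1 : Matrix (Fin p) (Fin p) ℂ) τ id := by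
        rw [this]; rfl
      rw [h3, Matrix.det_permute τ 1, Matrix.det_one, mul_one]
    rw [hdet]
    rcases Int.units_eq_one_or (Equiv.Perm.sign τ) with h | h <;>
      simp [h, Units.smul_def]
  · intro I _ hI
    have : ∃ j, v j ∉ I.1 := by
      by_contra h
      push_neg at h
      have hsub : S ⊆ I.1 := by
        intro x hx
        rcases hrange x hx with ⟨j, hj⟩
        exact hj ▸ h j
      have : S = I.1 := Finset.eq_of_subset_of_card_le hsub (by rw [hcard, I.2])
      exact hI (Subtype.ext this.symm)
    rcases this with ⟨j, hj⟩
    have hdet : (Matrix.of fun j j' =>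
        (Pi.basisFun ℂ (Fin n)) (v j) (I.1.orderEmbOfFin I.2 j')).det = 0 := by
      apply Matrix.det_eq_zero_of_row_eq_zero j
      intro j'
      have : I.1.orderEmbOfFin I.2 j' ≠ v j := by
        intro hh
        exact hj (hh ▸ I.1.orderEmbOfFin_mem I.2 j')
      simp [Pi.single_apply, this]
    rw [hdet, zero_smul]
  · intro h
    exact absurd (Finset.mem_univ I₀) h

lemma expand (u : Fin n → Fin n ⊕ Fin n) (a : Fin p → Fin n → ℂ) :
    (List.ofFn fun j => ∑ i, a j i • genU u i).prod
      = ∑ I : IdxC n p,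
        (Matrix.det (Matrix.of fun j j' => a j (I.1.orderEmbOfFin I.2 j'))) • monoU u p I := by
  have h1 : (List.ofFn fun j => ∑ i, a j i • genU u i)
      = List.ofFn fun j => ExteriorAlgebra.ι ℂ (embU u (a j)) := by
    simp [ι_embU]
  rw [h1, ← ExteriorAlgebra.ιMulti_apply]
  have h2 : ExteriorAlgebra.ιMulti ℂ p (fun j => embU u (a j)) = AU u p a := rfl
  rw [h2, AU_eq_BU, BU_apply]

def posIJ (I J : IdxC n p) : Fin (p + p) → Fin n ⊕ Fin n :=
  Fin.append (fun j => Sum.inl (I.1.orderEmbOfFin I.2 j))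
    (fun j => Sum.inr (J.1.orderEmbOfFin J.2 j))

lemma posIJ_injective (I J : IdxC n p) : Function.Injective (posIJ I J) := by
  intro r r'
  induction r using Fin.addCases with
  | left i =>
    induction r' using Fin.addCases with
    | left i' =>
      intro h
      rw [posIJ, Fin.append_left, Fin.append_left, Sum.inl.injEq] at h
      rw [(I.1.orderEmbOfFin I.2).injective h]
    | right i' =>
      intro h
      rw [posIJ, Fin.append_left, Fin.append_right] at h
      exact absurd h (by simp)
  | right i =>
    induction r' using Fin.addCases with
    | left i' =>
      intro h
      rw [posIJ, Fin.append_right, Fin.append_left] at h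
      exact absurd h (by simp)
    | right i' =>
      intro h
      rw [posIJ, Fin.append_right, Fin.append_right, Sum.inr.injEq] at h
      rw [(J.1.orderEmbOfFin J.2).injective h]

lemma mem_image_posIJ_inl (I J : IdxC n p) (i : Fin n) :
    Sum.inl i ∈ Finset.image (posIJ I J) Finset.univ ↔ i ∈ I.1 := by
  constructor
  · intro h
    rcases Finset.mem_image.1 h with ⟨r, _, hr⟩
    induction r using Fin.addCases with
    | left j =>
      rw [posIJ, Fin.append_left, Sum.inl.injEq] at hr
      exact hr ▸ I.1.orderEmbOfFin_mem I.2 j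
    | right j =>
      rw [posIJ, Fin.append_right] at hr
      exact absurd hr (by simp)
  · intro h
    have : (i : Fin n) ∈ Set.range (I.1.orderEmbOfFin I.2) := by
      rw [Finset.range_orderEmbOfFin]; exact h
    rcases this with ⟨j, hj⟩
    exact Finset.mem_image.2 ⟨Fin.castAdd p j, Finset.mem_univ _, by
      rw [posIJ, Fin.append_left, hj]⟩

lemma mem_image_posIJ_inr (I J : IdxC n p) (i : Fin n) :
    Sum.inr i ∈ Finset.image (posIJ I J) Finset.univ ↔ i ∈ J.1 := by
  constructor
  · intro h
    rcases Finset.mem_image.1 h with ⟨r, _, hr⟩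
    induction r using Fin.addCases with
    | left j =>
      rw [posIJ, Fin.append_left] at hr
      exact absurd hr (by simp)
    | right j =>
      rw [posIJ, Fin.append_right, Sum.inr.injEq] at hr
      exact hr ▸ J.1.orderEmbOfFin_mem J.2 j
  · intro h
    have : (i : Fin n) ∈ Set.range (J.1.orderEmbOfFin J.2) := by
      rw [Finset.range_orderEmbOfFin]; exact h
    rcases this with ⟨j, hj⟩
    exact Finset.mem_image.2 ⟨Fin.natAdd p j, Finset.mem_univ _, by
      rw [posIJ, Fin.append_right, hj]⟩

def coefMap (I J : IdxC n p) : CForms n →ₗ[ℂ] ℂ :=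
  ExteriorAlgebra.liftAlternating
    (Function.update (fun i => (0 : (((Fin n ⊕ Fin n) → ℂ) [⋀^Fin i]→ₗ[ℂ] ℂ))) (p + p)
      ((Matrix.detRowAlternating (n := Fin (p + p)) (R := ℂ)).compLinearMap
        (LinearMap.funLeft ℂ ℂ (posIJ I J))))

lemma mono_mul_monoBar (I J : IdxC n p) :
    cMonomial p I * cMonomialBar p J
      = ExteriorAlgebra.ιMulti ℂ (p + p) (fun r => gv (posIJ I J r)) := by
  rw [ExteriorAlgebra.ιMulti_apply, cMonomial, cMonomialBar, ← List.prod_append,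
    ← List.ofFn_fin_append]
  have : (Fin.append (fun j => cdu (I.1.orderEmbOfFin I.2 j))
      (fun j => cdub (J.1.orderEmbOfFin J.2 j)))
      = fun r => ExteriorAlgebra.ι ℂ (gv (posIJ I J r)) := by
    funext r
    induction r using Fin.addCases with
    | left j => rw [Fin.append_left, posIJ, Fin.append_left]; rfl
    | right j => rw [Fin.append_right, posIJ, Fin.append_right]; rfl
  rw [this]

lemma coefMap_eval (I J I' J' : IdxC n p) :
    coefMap I J (cMonomial p I' * cMonomialBar p J')
      = if I' = I ∧ J' = J then 1 else 0 := by
  classical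
  rw [mono_mul_monoBar, coefMap, ExteriorAlgebra.liftAlternating_apply_ιMulti,
    Function.update_self]
  simp only [AlternatingMap.compLinearMap_apply]
  by_cases h : I' = I ∧ J' = J
  · rcases h with ⟨h1, h2⟩
    subst h1; subst h2
    rw [if_pos ⟨rfl, rfl⟩]
    have hD : (fun r => LinearMap.funLeft ℂ ℂ (posIJ I' J') (gv (posIJ I' J' r)))
        = fun r c => (1 : Matrix (Fin (p + p)) (Fin (p + p)) ℂ) r c := by
      funext r c
      simp only [LinearMap.funLeft_apply, gv, Pi.single_apply, Matrix.one_apply]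
      by_cases hc : r = c
      · simp [hc]
      · have : posIJ I' J' c ≠ posIJ I' J' r := fun hh =>
          hc ((posIJ_injective I' J' hh).symm)
        simp [hc, this]
    show Matrix.detRowAlternating (fun r => LinearMap.funLeft ℂ ℂ (posIJ I' J')
      (gv (posIJ I' J' r))) = 1
    rw [hD]
    exact Matrix.det_one
  · rw [if_neg h]
    -- find a row of zeros
    have hex : ∃ r, posIJ I' J' r ∉ Finset.image (posIJ I J) Finset.univ := by
      by_contra hc
      push_neg at hc
      have hsub : Finset.image (posIJ I' J') Finset.univ
          ⊆ Finset.image (posIJ I J) Finset.univ := by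
        intro x hx
        rcases Finset.mem_image.1 hx with ⟨r, _, hr⟩
        exact hr ▸ hc r
      have heq : Finset.image (posIJ I' J') Finset.univ
          = Finset.image (posIJ I J) Finset.univ := by
        refine Finset.eq_of_subset_of_card_le hsub ?_
        rw [Finset.card_image_of_injective _ (posIJ_injective I J),
          Finset.card_image_of_injective _ (posIJ_injective I' J')]
      have hI : I' = I := by
        refine Subtype.ext (Finset.ext fun i => ?_)
        rw [← mem_image_posIJ_inl I' J' i, ← mem_image_posIJ_inl I J i, heq]
      have hJ : J' = J := by
        refine Subtype.ext (Finset.ext fun i => ?_)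
        rw [← mem_image_posIJ_inr I' J' i, ← mem_image_posIJ_inr I J i, heq]
      exact h ⟨hI, hJ⟩
    rcases hex with ⟨r, hr⟩
    show Matrix.detRowAlternating (fun r => LinearMap.funLeft ℂ ℂ (posIJ I J)
      (gv (posIJ I' J' r))) = 0
    apply Matrix.det_eq_zero_of_row_eq_zero r
    intro c
    have : posIJ I J c ≠ posIJ I' J' r := by
      intro hh
      exact hr (hh ▸ Finset.mem_image_of_mem _ (Finset.mem_univ c))
    simp [LinearMap.funLeft_apply, gv, Pi.single_apply, this]

lemma coefMap_std (c : IdxC n p → IdxC n p → ℂ) (I J : IdxC n p) :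
    coefMap I J (∑ I', ∑ J', c I' J' • (cMonomial p I' * cMonomialBar p J')) = c I J := by
  classical
  simp only [map_sum, map_smul, coefMap_eval, smul_eq_mul, mul_ite, mul_one, mul_zero]
  rw [Finset.sum_eq_single I]
  · rw [Finset.sum_eq_single J]
    · simp
    · intro J' _ hJ'
      simp [hJ']
    · intro h
      exact absurd (Finset.mem_univ J) h
  · intro I' _ hI'
    simp [hI']
  · intro h
    exact absurd (Finset.mem_univ I) h

lemma std_rep_unique {c d : IdxC n p → IdxC n p → ℂ}
    (h : ∑ I, ∑ J, c I J • (cMonomial p I * cMonomialBar p J)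
       = ∑ I, ∑ J, d I J • (cMonomial p I * cMonomialBar p J)) : c = d := by
  funext I J
  have := congrArg (coefMap I J) h
  rwa [coefMap_std, coefMap_std] at this

lemma ι_mul_map_prod_swap (x : (Fin n ⊕ Fin n) → ℂ) (l : List ((Fin n ⊕ Fin n) → ℂ)) :
    ExteriorAlgebra.ι ℂ x * (l.map (ExteriorAlgebra.ι ℂ)).prod
      = ((-1 : ℂ)) ^ l.length • ((l.map (ExteriorAlgebra.ι ℂ)).prod * ExteriorAlgebra.ι ℂ x) := by
  induction l with
  | nil => simp
  | cons y l ih =>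
    have hswap : ExteriorAlgebra.ι ℂ x * ExteriorAlgebra.ι ℂ y
        = -(ExteriorAlgebra.ι ℂ y * ExteriorAlgebra.ι ℂ x) :=
      eq_neg_of_add_eq_zero_left (ExteriorAlgebra.ι_add_mul_swap x y)
    simp only [List.map_cons, List.prod_cons, List.length_cons]
    calc ExteriorAlgebra.ι ℂ x * (ExteriorAlgebra.ι ℂ y * (l.map (ExteriorAlgebra.ι ℂ)).prod)
        = (ExteriorAlgebra.ι ℂ x * ExteriorAlgebra.ι ℂ y) * (l.map (ExteriorAlgebra.ι ℂ)).prod := by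
          rw [mul_assoc]
      _ = -(ExteriorAlgebra.ι ℂ y * (ExteriorAlgebra.ι ℂ x * (l.map (ExteriorAlgebra.ι ℂ)).prod)) := by
          rw [hswap]; simp [mul_assoc]
      _ = -(ExteriorAlgebra.ι ℂ y * ((-1 : ℂ) ^ l.length • ((l.map (ExteriorAlgebra.ι ℂ)).prod * ExteriorAlgebra.ι ℂ x))) := by
          rw [ih]
      _ = (-1 : ℂ) ^ (l.length + 1) • (ExteriorAlgebra.ι ℂ y * (l.map (ExteriorAlgebra.ι ℂ)).prod * ExteriorAlgebra.ι ℂ x) := by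
          rw [mul_smul_comm, pow_succ]
          simp [mul_assoc, mul_comm]

lemma map_prod_mul_map_prod_swap (l₁ l₂ : List ((Fin n ⊕ Fin n) → ℂ)) :
    (l₁.map (ExteriorAlgebra.ι ℂ)).prod * (l₂.map (ExteriorAlgebra.ι ℂ)).prod
      = ((-1 : ℂ)) ^ (l₁.length * l₂.length) •
        ((l₂.map (ExteriorAlgebra.ι ℂ)).prod * (l₁.map (ExteriorAlgebra.ι ℂ)).prod) := by
  induction l₁ with
  | nil => simp
  | cons y l ih =>
    simp only [List.map_cons, List.prod_cons, List.length_cons]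
    rw [mul_assoc, ih, mul_smul_comm, ← mul_assoc, ι_mul_map_prod_swap, smul_mul_assoc,
      smul_smul, mul_assoc, ← pow_add]
    congr 2
    ring


variable {n p : ℕ}

section Conj
variable {σc : CForms n → CForms n} (hσ : IsConjugation n σc)
include hσ

lemma conj_zero : σc 0 = 0 := by
  have := hσ.map_add 0 0
  simpa using this.symm

lemma conj_sum {α : Type*} (s : Finset α) (f : α → CForms n) :
    σc (∑ a ∈ s, f a) = ∑ a ∈ s, σc (f a) := by
  classical
  induction s using Finset.induction with
  | empty => simpa using conj_zero hσ
  | insert _ _ h ih => rw [Finset.sum_insert h, Finset.sum_insert h, hσ.map_add, ih]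

lemma conj_listprod (l : List (CForms n)) : σc l.prod = (l.map σc).prod := by
  induction l with
  | nil => simpa using hσ.map_one
  | cons y l ih => rw [List.prod_cons, hσ.map_mul, ih, List.map_cons, List.prod_cons]

lemma conj_cMonomial (I : IdxC n p) : σc (cMonomial p I) = cMonomialBar p I := by
  rw [cMonomial, conj_listprod hσ, List.map_ofFn, cMonomialBar]
  have : (σc ∘ fun j => cdu (I.1.orderEmbOfFin I.2 j))
      = fun j => cdub (I.1.orderEmbOfFin I.2 j) := funext fun j => hσ.map_du _
  rw [this]

lemma conj_cMonomialBar (I : IdxC n p) : σc (cMonomialBar p I) = cMonomial p I := by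
  rw [cMonomialBar, conj_listprod hσ, List.map_ofFn, cMonomial]
  have : (σc ∘ fun j => cdub (I.1.orderEmbOfFin I.2 j))
      = fun j => cdu (I.1.orderEmbOfFin I.2 j) := funext fun j => hσ.map_dub _
  rw [this]

end Conj

lemma monoBar_mul_mono (I J : IdxC n p) :
    cMonomialBar p J * cMonomial p I
      = ((-1 : ℂ)) ^ (p * p) • (cMonomial p I * cMonomialBar p J) := by
  have h1 : cMonomial p I = ((List.ofFn fun j => Pi.single (Sum.inl (I.1.orderEmbOfFin I.2 j))
      (1 : ℂ)).map (ExteriorAlgebra.ι ℂ)).prod := by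
    rw [List.map_ofFn, cMonomial]; rfl
  have h2 : cMonomialBar p J = ((List.ofFn fun j => Pi.single (Sum.inr (J.1.orderEmbOfFin J.2 j))
      (1 : ℂ)).map (ExteriorAlgebra.ι ℂ)).prod := by
    rw [List.map_ofFn, cMonomialBar]; rfl
  rw [h1, h2, map_prod_mul_map_prod_swap]
  simp

lemma neg_one_pow_mul_self (p : ℕ) : ((-1 : ℂ)) ^ (p * p) = (-1 : ℂ) ^ p := by
  rcases Nat.even_or_odd p with h | h
  · rw [(h.mul_right p).neg_one_pow, h.neg_one_pow]
  · rw [(h.mul h).neg_one_pow, h.neg_one_pow]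

lemma sq_eq_twice_half_add (p : ℕ) : p ^ 2 = 2 * (p * (p - 1) / 2) + p := by
  have hdvd : 2 ∣ p * (p - 1) := by
    rcases Nat.even_or_odd p with h | h
    · exact (h.mul_right _).two_dvd
    · exact ((Nat.Odd.sub_odd h odd_one).mul_left _).two_dvd
  rw [Nat.mul_div_cancel' hdvd]
  cases p with
  | zero => rfl
  | succ q =>
    simp only [Nat.succ_sub_one]
    ring

/-- The key scalar identity `(-1)^{p(p-1)/2} (-i)^p i^{p²} = 1`. -/
lemma scalar_id (p : ℕ) :
    ((-1 : ℂ)) ^ (p * (p - 1) / 2) * (-Complex.I) ^ p * Complex.I ^ (p ^ 2) = 1 := by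
  rw [sq_eq_twice_half_add p, pow_add, pow_mul, Complex.I_sq]
  calc ((-1 : ℂ)) ^ (p * (p - 1) / 2) * (-Complex.I) ^ p
        * ((-1 : ℂ) ^ (p * (p - 1) / 2) * Complex.I ^ p)
      = (((-1 : ℂ)) ^ (p * (p - 1) / 2) * ((-1 : ℂ)) ^ (p * (p - 1) / 2))
        * ((-Complex.I) ^ p * Complex.I ^ p) := by ring
    _ = 1 := by
      rw [← pow_add, ← mul_pow]
      have h1 : (-Complex.I) * Complex.I = 1 := by
        simp [Complex.I_mul_I]
      rw [h1, one_pow, mul_one, ← two_mul, pow_mul]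
      norm_num

lemma scalar_s_ne_zero (p : ℕ) : ((-1 : ℂ)) ^ (p * (p - 1) / 2) * (-Complex.I) ^ p ≠ 0 :=
  left_ne_zero_of_mul_eq_one (scalar_id p)

lemma conj_scalar_s (p : ℕ) :
    (starRingEnd ℂ) (((-1 : ℂ)) ^ (p * (p - 1) / 2) * (-Complex.I) ^ p)
      = ((-1 : ℂ)) ^ p * (((-1 : ℂ)) ^ (p * (p - 1) / 2) * (-Complex.I) ^ p) := by
  rw [map_mul, map_pow, map_pow]
  have h1 : (starRingEnd ℂ) (-1 : ℂ) = -1 := by simp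
  have h2 : (starRingEnd ℂ) (-Complex.I) = Complex.I := by simp
  rw [h1, h2]
  have h3 : (Complex.I : ℂ) ^ p = ((-1 : ℂ)) ^ p * (-Complex.I) ^ p := by
    rw [← mul_pow]
    norm_num
  rw [h3]
  ring

lemma conj_eta {σc : CForms n → CForms n} (hσ : IsConjugation n σc)
    (c : IdxC n p → IdxC n p → ℂ) :
    σc (∑ I, ∑ J, c I J • (cMonomial p I * cMonomialBar p J))
      = ∑ I, ∑ J, (((-1 : ℂ)) ^ p * (starRingEnd ℂ) (c J I)) •
          (cMonomial p I * cMonomialBar p J) := by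
  rw [conj_sum hσ]
  have hterm : ∀ I J : IdxC n p, σc (c I J • (cMonomial p I * cMonomialBar p J))
      = (((-1 : ℂ)) ^ p * (starRingEnd ℂ) (c I J)) • (cMonomial p J * cMonomialBar p I) := by
    intro I J
    rw [hσ.map_smul, hσ.map_mul, conj_cMonomial hσ, conj_cMonomialBar hσ,
      monoBar_mul_mono, smul_smul, neg_one_pow_mul_self, mul_comm]
  calc ∑ I, σc (∑ J, c I J • (cMonomial p I * cMonomialBar p J))
      = ∑ I, ∑ J, (((-1 : ℂ)) ^ p * (starRingEnd ℂ) (c I J)) •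
          (cMonomial p J * cMonomialBar p I) := by
        refine Finset.sum_congr rfl fun I _ => ?_
        rw [conj_sum hσ]
        exact Finset.sum_congr rfl fun J _ => hterm I J
    _ = ∑ J, ∑ I, (((-1 : ℂ)) ^ p * (starRingEnd ℂ) (c I J)) •
          (cMonomial p J * cMonomialBar p I) := Finset.sum_comm
    _ = ∑ I, ∑ J, (((-1 : ℂ)) ^ p * (starRingEnd ℂ) (c J I)) •
          (cMonomial p I * cMonomialBar p J) := rfl

lemma part1_iff {σc : CForms n → CForms n} (hσ : IsConjugation n σc)
    (c : IdxC n p → IdxC n p → ℂ) :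
    (σc (∑ I, ∑ J, c I J • (cMonomial p I * cMonomialBar p J))
        = ∑ I, ∑ J, c I J • (cMonomial p I * cMonomialBar p J))
      ↔ Matrix.IsHermitian (Matrix.of fun I J : IdxC n p =>
          ((-1 : ℂ)) ^ (p * (p - 1) / 2) * (-Complex.I) ^ p * c I J) := by
  have key : (σc (∑ I, ∑ J, c I J • (cMonomial p I * cMonomialBar p J))
      = ∑ I, ∑ J, c I J • (cMonomial p I * cMonomialBar p J))
      ↔ ∀ I J : IdxC n p, ((-1 : ℂ)) ^ p * (starRingEnd ℂ) (c J I) = c I J := by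
    rw [conj_eta hσ]
    constructor
    · intro h I J
      have := congrFun (congrFun (std_rep_unique h) I) J
      exact this
    · intro h
      refine Finset.sum_congr rfl fun I _ => Finset.sum_congr rfl fun J _ => ?_
      rw [h I J]
  rw [key, Matrix.IsHermitian, ← Matrix.ext_iff]
  have hs := scalar_s_ne_zero p
  have hstar : ∀ z : ℂ, star z = (starRingEnd ℂ) z := fun z => rfl
  constructor
  · intro h I J
    rw [Matrix.conjTranspose_apply, Matrix.of_apply, Matrix.of_apply]
    rw [hstar, map_mul, conj_scalar_s]
    rw [← h I J]
    ring
  · intro h I J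
    have h2 := h I J
    rw [Matrix.conjTranspose_apply, Matrix.of_apply, Matrix.of_apply, hstar, map_mul,
      conj_scalar_s] at h2
    refine mul_left_cancel₀ hs ?_
    rw [← h2]
    ring

lemma cDecomp_expand (a : Fin p → Fin n → ℂ) :
    cDecomp a = ∑ I : IdxC n p,
      (Matrix.det (Matrix.of fun j j' => a j (I.1.orderEmbOfFin I.2 j'))) • cMonomial p I := by
  have h := expand Sum.inl a
  simp only [genU_inl, monoU_inl] at h
  rw [cDecomp]
  simp only [cOne]
  exact h

lemma cDecompBar_expand (a : Fin p → Fin n → ℂ) :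
    cDecompBar a = ∑ J : IdxC n p,
      ((starRingEnd ℂ) (Matrix.det (Matrix.of fun j j' => a j (J.1.orderEmbOfFin J.2 j'))))
        • cMonomialBar p J := by
  have h := expand Sum.inr (fun j i => (starRingEnd ℂ) (a j i))
  simp only [genU_inr, monoU_inr] at h
  rw [cDecompBar]
  simp only [cConjOne]
  rw [h]
  refine Finset.sum_congr rfl fun J _ => ?_
  congr 1
  rw [RingHom.map_det]
  rfl

lemma sum_smul_mul_expand (w v : IdxC n p → ℂ) :
    (∑ I, w I • cMonomial p I) * (∑ J, v J • cMonomialBar p J)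
      = ∑ I, ∑ J, (w I * v J) • (cMonomial p I * cMonomialBar p J) := by
  rw [Finset.sum_mul_sum]
  exact Finset.sum_congr rfl fun I _ => Finset.sum_congr rfl fun J _ =>
    smul_mul_smul_comm (w I) (cMonomial p I) (v J) (cMonomialBar p J)

lemma posGen_std {m : ℕ} (a : Fin m → Fin p → Fin n → ℂ) :
    Complex.I ^ (p ^ 2) • ((∑ l, cDecomp (a l)) * (∑ l, cDecompBar (a l)))
      = ∑ I : IdxC n p, ∑ J : IdxC n p,
        (Complex.I ^ (p ^ 2)
          * (∑ l, Matrix.det (Matrix.of fun j j' => a l j (I.1.orderEmbOfFin I.2 j')))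
          * (starRingEnd ℂ)
            (∑ l, Matrix.det (Matrix.of fun j j' => a l j (J.1.orderEmbOfFin J.2 j'))))
          • (cMonomial p I * cMonomialBar p J) := by
  set w : IdxC n p → ℂ := fun I =>
    ∑ l, Matrix.det (Matrix.of fun j j' => a l j (I.1.orderEmbOfFin I.2 j')) with hw
  have h1 : (∑ l, cDecomp (a l)) = ∑ I : IdxC n p, w I • cMonomial p I := by
    simp only [cDecomp_expand]
    rw [Finset.sum_comm]
    exact Finset.sum_congr rfl fun I _ => (Finset.sum_smul).symm
  have h2 : (∑ l, cDecompBar (a l)) = ∑ J : IdxC n p, (starRingEnd ℂ) (w J) • cMonomialBar p J := by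
    simp only [cDecompBar_expand]
    rw [Finset.sum_comm]
    refine Finset.sum_congr rfl fun J _ => ?_
    rw [hw]
    simp only [map_sum]
    exact (Finset.sum_smul).symm
  rw [h1, h2, sum_smul_mul_expand, Finset.smul_sum]
  refine Finset.sum_congr rfl fun I _ => ?_
  rw [Finset.smul_sum]
  refine Finset.sum_congr rfl fun J _ => ?_
  rw [smul_smul, mul_assoc]

open scoped ComplexOrder in
lemma part2_forward (c : IdxC n p → IdxC n p → ℂ)
    (h : (∑ I, ∑ J, c I J • (cMonomial p I * cMonomialBar p J)) ∈ cPos n p) :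
    Matrix.PosSemidef (Matrix.of fun I J : IdxC n p =>
      ((-1 : ℂ)) ^ (p * (p - 1) / 2) * (-Complex.I) ^ p * c I J) := by
  classical
  obtain ⟨m, t, y, ht, hy, hsum⟩ := h
  choose mk ak hak using hy
  -- the coefficient vectors
  set w : (k : Fin m) → IdxC n p → ℂ := fun k I =>
    ∑ l, Matrix.det (Matrix.of fun j j' => ak k l j (I.1.orderEmbOfFin I.2 j')) with hwdef
  have hyk : ∀ k, y k = ∑ I : IdxC n p, ∑ J : IdxC n p,
      (Complex.I ^ (p ^ 2) * w k I * (starRingEnd ℂ) (w k J))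
        • (cMonomial p I * cMonomialBar p J) := by
    intro k
    rw [hak k, posGen_std]
  have hstd : ∑ I, ∑ J, c I J • (cMonomial p I * cMonomialBar p J)
      = ∑ I, ∑ J, (∑ k, (t k : ℂ) * (Complex.I ^ (p ^ 2) * w k I * (starRingEnd ℂ) (w k J)))
        • (cMonomial p I * cMonomialBar p J) := by
    rw [hsum]
    calc ∑ k, (t k : ℂ) • y k
        = ∑ k, ∑ I, ∑ J, ((t k : ℂ) * (Complex.I ^ (p ^ 2) * w k I * (starRingEnd ℂ) (w k J)))
            • (cMonomial p I * cMonomialBar p J) := by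
          refine Finset.sum_congr rfl fun k _ => ?_
          rw [hyk k, Finset.smul_sum]
          refine Finset.sum_congr rfl fun I _ => ?_
          rw [Finset.smul_sum]
          refine Finset.sum_congr rfl fun J _ => ?_
          rw [smul_smul]
      _ = ∑ I, ∑ J, (∑ k, (t k : ℂ) * (Complex.I ^ (p ^ 2) * w k I * (starRingEnd ℂ) (w k J)))
            • (cMonomial p I * cMonomialBar p J) := by
          rw [Finset.sum_comm]
          refine Finset.sum_congr rfl fun I _ => ?_
          rw [Finset.sum_comm]
          refine Finset.sum_congr rfl fun J _ => ?_
          rw [Finset.sum_smul]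
  have hc : ∀ I J, c I J
      = ∑ k, (t k : ℂ) * (Complex.I ^ (p ^ 2) * w k I * (starRingEnd ℂ) (w k J)) := by
    intro I J
    exact congrFun (congrFun (std_rep_unique hstd) I) J
  -- the matrix is `Bᴴ * B`
  set B : Matrix (Fin m) (IdxC n p) ℂ := Matrix.of fun k I =>
    ((Real.sqrt (t k) : ℝ) : ℂ) * (starRingEnd ℂ) (w k I) with hB
  have hM : (Matrix.of fun I J : IdxC n p =>
      ((-1 : ℂ)) ^ (p * (p - 1) / 2) * (-Complex.I) ^ p * c I J) = B.conjTranspose * B := by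
    ext I J
    rw [Matrix.mul_apply, Matrix.of_apply, hc I J, Finset.mul_sum]
    refine Finset.sum_congr rfl fun k _ => ?_
    rw [Matrix.conjTranspose_apply]
    have hstar : (star (B k I) : ℂ) = ((Real.sqrt (t k) : ℝ) : ℂ) * w k I := by
      rw [hB]
      simp only [Matrix.of_apply]
      rw [star_mul']
      rw [show (star ((starRingEnd ℂ) (w k I)) : ℂ) = w k I from Complex.conj_conj _]
      rw [show (star (((Real.sqrt (t k) : ℝ) : ℂ)) : ℂ) = ((Real.sqrt (t k) : ℝ) : ℂ) from
        Complex.conj_ofReal _]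
    have hBkJ : B k J = ((Real.sqrt (t k) : ℝ) : ℂ) * (starRingEnd ℂ) (w k J) := rfl
    rw [hstar, hBkJ]
    have hts : (((Real.sqrt (t k)) : ℝ) : ℂ) * (((Real.sqrt (t k)) : ℝ) : ℂ) = ((t k : ℝ) : ℂ) := by
      rw [← Complex.ofReal_mul, Real.mul_self_sqrt (ht k)]
    calc ((-1 : ℂ)) ^ (p * (p - 1) / 2) * (-Complex.I) ^ p
          * ((t k : ℂ) * (Complex.I ^ (p ^ 2) * w k I * (starRingEnd ℂ) (w k J)))
        = (((-1 : ℂ)) ^ (p * (p - 1) / 2) * (-Complex.I) ^ p * Complex.I ^ (p ^ 2))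
          * ((t k : ℂ) * w k I * (starRingEnd ℂ) (w k J)) := by ring
      _ = (t k : ℂ) * w k I * (starRingEnd ℂ) (w k J) := by rw [scalar_id p, one_mul]
      _ = (((Real.sqrt (t k) : ℝ) : ℂ) * w k I)
          * (((Real.sqrt (t k) : ℝ) : ℂ) * (starRingEnd ℂ) (w k J)) := by
          rw [← hts]; ring
  rw [hM]
  exact Matrix.posSemidef_conjTranspose_mul_self B

lemma cMonomial_zero (I : IdxC n 0) : cMonomial 0 I = 1 := by
  rw [cMonomial]
  simp

lemma cMonomialBar_zero (I : IdxC n 0) : cMonomialBar 0 I = 1 := by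
  rw [cMonomialBar]
  simp

lemma prod_smul_head {q : ℕ} (z : ℂ) (f : Fin (q + 1) → CForms n) :
    (List.ofFn (fun j => (if j = 0 then z else 1) • f j)).prod = z • (List.ofFn f).prod := by
  rw [List.ofFn_succ, List.ofFn_succ, List.prod_cons, List.prod_cons]
  have h0 : (if (0 : Fin (q + 1)) = 0 then z else 1) = z := if_pos rfl
  have h1 : (fun j : Fin q => (if j.succ = 0 then z else 1) • f j.succ) = fun j => f j.succ := by
    funext j
    rw [if_neg (Fin.succ_ne_zero j), one_smul]
  rw [h0, h1, smul_mul_assoc]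

open scoped ComplexOrder in
lemma part2_backward (c : IdxC n p → IdxC n p → ℂ)
    (h : Matrix.PosSemidef (Matrix.of fun I J : IdxC n p =>
      ((-1 : ℂ)) ^ (p * (p - 1) / 2) * (-Complex.I) ^ p * c I J)) :
    (∑ I, ∑ J, c I J • (cMonomial p I * cMonomialBar p J)) ∈ cPos n p := by
  classical
  obtain ⟨B, hB⟩ : ∃ B : Matrix (IdxC n p) (IdxC n p) ℂ, (Matrix.of fun I J : IdxC n p =>
      ((-1 : ℂ)) ^ (p * (p - 1) / 2) * (-Complex.I) ^ p * c I J) = B.conjTranspose * B := by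
    open scoped MatrixOrder in exact CStarAlgebra.nonneg_iff_eq_star_mul_self.mp h.nonneg
  set w : IdxC n p → IdxC n p → ℂ := fun K I => (starRingEnd ℂ) (B K I) with hw
  have hc : ∀ I J, c I J = Complex.I ^ (p ^ 2) * ∑ K, w K I * (starRingEnd ℂ) (w K J) := by
    intro I J
    have h1 : ((-1 : ℂ)) ^ (p * (p - 1) / 2) * (-Complex.I) ^ p * c I J
        = ∑ K, w K I * (starRingEnd ℂ) (w K J) := by
      have h2 := congrFun (congrFun (congrArg (fun M => (M : Matrix _ _ ℂ)) hB) I) J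
      simp only [Matrix.of_apply] at h2
      rw [h2, Matrix.mul_apply]
      refine Finset.sum_congr rfl fun K _ => ?_
      rw [Matrix.conjTranspose_apply, hw]
      simp only []
      rw [show ((starRingEnd ℂ) ((starRingEnd ℂ) (B K J)) : ℂ) = B K J from Complex.conj_conj _]
      rfl
    calc c I J = (Complex.I ^ (p ^ 2) * (((-1 : ℂ)) ^ (p * (p - 1) / 2) * (-Complex.I) ^ p))
          * c I J := by
          have hid : Complex.I ^ (p ^ 2)
              * (((-1 : ℂ)) ^ (p * (p - 1) / 2) * (-Complex.I) ^ p) = 1 := by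
            rw [mul_comm, mul_assoc]
            rw [show ((-1 : ℂ)) ^ (p * (p - 1) / 2) * ((-Complex.I) ^ p * Complex.I ^ (p ^ 2))
              = ((-1 : ℂ)) ^ (p * (p - 1) / 2) * (-Complex.I) ^ p * Complex.I ^ (p ^ 2) from by ring]
            exact scalar_id p
          rw [hid, one_mul]
      _ = Complex.I ^ (p ^ 2) * (((-1 : ℂ)) ^ (p * (p - 1) / 2) * (-Complex.I) ^ p * c I J) := by
          ring
      _ = Complex.I ^ (p ^ 2) * ∑ K, w K I * (starRingEnd ℂ) (w K J) := by rw [h1]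
  by_cases hp : p = 0
  · -- the case `p = 0`
    subst hp
    set e : IdxC n 0 := ⟨∅, Finset.card_empty⟩ with he
    have huniq : ∀ I : IdxC n 0, I = e := fun I =>
      Subtype.ext ((Finset.card_eq_zero.mp I.2).trans rfl)
    have huniv : (Finset.univ : Finset (IdxC n 0)) = {e} := by
      ext I
      simp [huniq I]
    have hlhs : (∑ I, ∑ J, c I J • (cMonomial 0 I * cMonomialBar 0 J)) = c e e • 1 := by
      rw [huniv, Finset.sum_singleton, Finset.sum_singleton, cMonomial_zero, cMonomialBar_zero,
        one_mul]
    have hcee : c e e = ((Complex.normSq (w e e) : ℝ) : ℂ) := by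
      rw [hc e e, huniv, Finset.sum_singleton]
      simp [Complex.mul_conj]
    refine ⟨1, fun _ => Complex.normSq (w e e), fun _ => (1 : CForms n),
      fun _ => Complex.normSq_nonneg _, fun _ => ⟨1, fun _ => fun j => j.elim0, ?_⟩, ?_⟩
    · simp [cDecomp, cDecompBar]
    · rw [hlhs, hcee]
      simp
  · -- the case `p ≠ 0`
    obtain ⟨q, rfl⟩ := Nat.exists_eq_succ_of_ne_zero hp
    set N := Fintype.card (IdxC n (q + 1)) with hN
    set e : Fin N ≃ IdxC n (q + 1) := (Fintype.equivFin (IdxC n (q + 1))).symm with he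
    set a : IdxC n (q + 1) → Fin N → Fin (q + 1) → Fin n → ℂ :=
      fun K l j i => (if j = 0 then w K (e l) else 1)
        * (if i = (e l).1.orderEmbOfFin (e l).2 j then 1 else 0) with ha
    have hone : ∀ K (l : Fin N) (j : Fin (q + 1)), cOne (a K l j)
        = (if j = 0 then w K (e l) else 1) • cdu ((e l).1.orderEmbOfFin (e l).2 j) := by
      intro K l j
      rw [cOne, Finset.sum_eq_single ((e l).1.orderEmbOfFin (e l).2 j)]
      · simp [ha]
      · intro i _ hi
        simp [ha, hi]
      · intro hmem
        exact absurd (Finset.mem_univ _) hmem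
    have honebar : ∀ K (l : Fin N) (j : Fin (q + 1)), cConjOne (a K l j)
        = (if j = 0 then (starRingEnd ℂ) (w K (e l)) else 1)
          • cdub ((e l).1.orderEmbOfFin (e l).2 j) := by
      intro K l j
      rw [cConjOne, Finset.sum_eq_single ((e l).1.orderEmbOfFin (e l).2 j)]
      · simp [ha, apply_ite (starRingEnd ℂ)]
      · intro i _ hi
        simp [ha, hi]
      · intro hmem
        exact absurd (Finset.mem_univ _) hmem
    have hdecomp : ∀ K (l : Fin N),
        cDecomp (a K l) = w K (e l) • cMonomial (q + 1) (e l) := by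
      intro K l
      rw [cDecomp]
      simp only [hone]
      exact prod_smul_head _ _
    have hdecompbar : ∀ K (l : Fin N),
        cDecompBar (a K l) = (starRingEnd ℂ) (w K (e l)) • cMonomialBar (q + 1) (e l) := by
      intro K l
      rw [cDecompBar]
      simp only [honebar]
      exact prod_smul_head _ _
    have hyK : ∀ K : IdxC n (q + 1),
        Complex.I ^ ((q + 1) ^ 2) • ((∑ l : Fin N, cDecomp (a K l))
            * (∑ l : Fin N, cDecompBar (a K l)))
          = ∑ I : IdxC n (q + 1), ∑ J : IdxC n (q + 1),
            (Complex.I ^ ((q + 1) ^ 2) * (w K I * (starRingEnd ℂ) (w K J)))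
              • (cMonomial (q + 1) I * cMonomialBar (q + 1) J) := by
      intro K
      have h1 : (∑ l : Fin N, cDecomp (a K l))
          = ∑ I : IdxC n (q + 1), w K I • cMonomial (q + 1) I := by
        simp only [hdecomp]
        exact Equiv.sum_comp e (fun I => w K I • cMonomial (q + 1) I)
      have h2 : (∑ l : Fin N, cDecompBar (a K l))
          = ∑ J : IdxC n (q + 1), (starRingEnd ℂ) (w K J) • cMonomialBar (q + 1) J := by
        simp only [hdecompbar]
        exact Equiv.sum_comp e (fun J => (starRingEnd ℂ) (w K J) • cMonomialBar (q + 1) J)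
      rw [h1, h2, sum_smul_mul_expand, Finset.smul_sum]
      refine Finset.sum_congr rfl fun I _ => ?_
      rw [Finset.smul_sum]
      refine Finset.sum_congr rfl fun J _ => ?_
      rw [smul_smul]
    refine ⟨N, fun _ => 1, fun k => Complex.I ^ ((q + 1) ^ 2)
        • ((∑ l : Fin N, cDecomp (a (e k) l)) * (∑ l : Fin N, cDecompBar (a (e k) l))),
      fun _ => zero_le_one, fun k => ⟨N, a (e k), rfl⟩, ?_⟩
    simp only [Complex.ofReal_one, one_smul]
    calc ∑ I, ∑ J, c I J • (cMonomial (q + 1) I * cMonomialBar (q + 1) J)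
        = ∑ I, ∑ J, (∑ K, Complex.I ^ ((q + 1) ^ 2) * (w K I * (starRingEnd ℂ) (w K J)))
            • (cMonomial (q + 1) I * cMonomialBar (q + 1) J) := by
          refine Finset.sum_congr rfl fun I _ => Finset.sum_congr rfl fun J _ => ?_
          rw [hc I J, Finset.mul_sum]
      _ = ∑ K, ∑ I, ∑ J, (Complex.I ^ ((q + 1) ^ 2) * (w K I * (starRingEnd ℂ) (w K J)))
            • (cMonomial (q + 1) I * cMonomialBar (q + 1) J) := by
          symm
          rw [Finset.sum_comm]
          refine Finset.sum_congr rfl fun I _ => ?_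
          rw [Finset.sum_comm]
          refine Finset.sum_congr rfl fun J _ => ?_
          rw [Finset.sum_smul]
      _ = ∑ k : Fin N, ∑ I, ∑ J,
            (Complex.I ^ ((q + 1) ^ 2) * (w (e k) I * (starRingEnd ℂ) (w (e k) J)))
            • (cMonomial (q + 1) I * cMonomialBar (q + 1) J) :=
          (Equiv.sum_comp e (fun K => ∑ I, ∑ J,
            (Complex.I ^ ((q + 1) ^ 2) * (w K I * (starRingEnd ℂ) (w K J)))
            • (cMonomial (q + 1) I * cMonomialBar (q + 1) J))).symm
      _ = ∑ k : Fin N, Complex.I ^ ((q + 1) ^ 2)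
            • ((∑ l : Fin N, cDecomp (a (e k) l)) * (∑ l : Fin N, cDecompBar (a (e k) l))) := by
          refine Finset.sum_congr rfl fun k _ => ?_
          rw [hyK (e k)]

end BGJK

open scoped ComplexOrder in
/-- Proposition 2.4 of Burgos Gil–Gubler–Jell–Künnemann.
Let `η ∈ Λ^{p,p}V*`, written in the standard monomial basis as
`η = Σ_{I,J} c_{IJ} du_I ∧ dū_J`.  The associated sesquilinear form `|η|` on `Λ^p V_ℂ`,
`|η|(x,y) = (-1)^{p(p-1)/2} i^{-p} η(x,ȳ)`, has matrix
`M_{IJ} = (-1)^{p(p-1)/2} (-i)^p c_{IJ}` in the standard basis `(e_I)` of `Λ^p V_ℂ`.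
Then `η` is real (i.e. `σ η = η`) if and only if `|η|` is Hermitian, and `η` is a
positive form if and only if `|η|` is a positive semidefinite Hermitian form. -/
theorem real_iff_hermitian_and_positive_iff_posSemidef
    (n p : ℕ) (σ : CForms n → CForms n) (hσ : IsConjugation n σ)
    (η : CForms n) (c : IdxC n p → IdxC n p → ℂ)
    (hrep : η = ∑ I, ∑ J, c I J • (cMonomial p I * cMonomialBar p J)) :
    (σ η = η ↔ Matrix.IsHermitian
        (Matrix.of fun I J : IdxC n p =>
          ((-1 : ℂ)) ^ (p * (p - 1) / 2) * (-Complex.I) ^ p * c I J)) ∧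
    (η ∈ cPos n p ↔ Matrix.PosSemidef
        (Matrix.of fun I J : IdxC n p =>
          ((-1 : ℂ)) ^ (p * (p - 1) / 2) * (-Complex.I) ^ p * c I J)) := by
  subst hrep
  exact ⟨BGJK.part1_iff hσ c, ⟨BGJK.part2_forward c, BGJK.part2_backward c⟩⟩
end
end

section
/- For every p ≥ 0, the complex vector space Λ^{p,p}V* admits a ℂ-basis consisting of strongly positive forms. -/
/- Setup: `V = ℝⁿ` with its standard basis, `V_ℂ` its complexification,
`V* = Hom_ℝ(V,ℂ)` and `V̄*` the antilinear maps `V_ℂ → ℂ`.  The bigraded exterior algebra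
`Λ^{·,·}V* = Λ_ℂ(V* ⊕ V̄*)` is modeled as the exterior algebra over `ℂ` of the free
complex module on the `2n` generators `du_1,…,du_n` (first summand) and
`dū_1,…,dū_n` (second summand). -/

noncomputable section
open ExteriorAlgebra

namespace SPaux

open Pointwise Submodule

variable {n : ℕ}

/-- The generator `α ∧ iᾱ` of the strong cone in degree one. -/
def hgen {n : ℕ} (c : Fin n → ℂ) : CForms n := cOne c * (Complex.I • cConjOne c)

lemma cOne_eq_iota (c : Fin n → ℂ) :
    cOne c = ExteriorAlgebra.ι ℂ (∑ i, c i • (Pi.single (Sum.inl i) (1:ℂ) : (Fin n ⊕ Fin n) → ℂ)) := by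
  simp [cOne, cdu, map_sum]

lemma cOneBar_eq_iota (c : Fin n → ℂ) :
    cOneBar c = ExteriorAlgebra.ι ℂ (∑ i, c i • (Pi.single (Sum.inr i) (1:ℂ) : (Fin n ⊕ Fin n) → ℂ)) := by
  simp [cOneBar, cdub, map_sum]

lemma cOneBar_mul_cOne (b a : Fin n → ℂ) :
    cOneBar b * cOne a = -(cOne a * cOneBar b) := by
  rw [cOne_eq_iota, cOneBar_eq_iota]
  exact eq_neg_of_add_eq_zero_right (ExteriorAlgebra.ι_add_mul_swap _ _)

lemma cConjOne_eq_cOneBar (c : Fin n → ℂ) :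
    cConjOne c = cOneBar (fun i => (starRingEnd ℂ) (c i)) := rfl

lemma cOneBar_eq_cConjOne (b : Fin n → ℂ) :
    cOneBar b = cConjOne (fun i => (starRingEnd ℂ) (b i)) := by
  simp [cConjOne, cOneBar]

lemma cOne_add_smul (a b : Fin n → ℂ) (t : ℂ) :
    cOne (a + t • b) = cOne a + t • cOne b := by
  simp [cOne, add_smul, smul_smul, Finset.sum_add_distrib, Finset.smul_sum]

lemma cConjOne_add_smul (a b : Fin n → ℂ) (t : ℂ) :
    cConjOne (a + t • b) = cConjOne a + (starRingEnd ℂ) t • cConjOne b := by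
  simp [cConjOne, add_smul, smul_smul, Finset.sum_add_distrib, Finset.smul_sum, map_add, map_mul]

lemma polar_core (A B C D : CForms n) :
    (4:ℂ) • (A*D) = (A+C)*(B+D) + Complex.I•((A+Complex.I•C)*(B-Complex.I•D))
      - (A-C)*(B-D) - Complex.I•((A-Complex.I•C)*(B+Complex.I•D)) := by
  simp only [mul_add, add_mul, sub_mul, mul_sub, smul_mul_assoc, mul_smul_comm, smul_smul,
    smul_sub, smul_add]
  match_scalars <;> simp [Complex.ext_iff] <;> norm_num

/-- Polarization: `cOne a * cConjOne b` as a combination of diagonal terms. -/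
lemma polarization (a b : Fin n → ℂ) :
    (4:ℂ) • (cOne a * cConjOne b) =
      cOne (a + (1:ℂ) • b) * cConjOne (a + (1:ℂ) • b)
      + Complex.I • (cOne (a + Complex.I • b) * cConjOne (a + Complex.I • b))
      - cOne (a + (-1:ℂ) • b) * cConjOne (a + (-1:ℂ) • b)
      - Complex.I • (cOne (a + (-Complex.I) • b) * cConjOne (a + (-Complex.I) • b)) := by
  rw [cOne_add_smul, cOne_add_smul, cOne_add_smul, cOne_add_smul,
    cConjOne_add_smul, cConjOne_add_smul, cConjOne_add_smul, cConjOne_add_smul]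
  have h := polar_core (cOne a) (cConjOne a) (cOne b) (cConjOne b)
  simp only [map_one, Complex.conj_I, map_neg, one_smul, neg_smul] at *
  convert h using 2 <;> abel_nf

lemma mem_pow_range {g : (Fin n → ℂ) → CForms n} {p : ℕ} {x : CForms n} :
    x ∈ Set.range g ^ p ↔ ∃ c : Fin p → Fin n → ℂ, x = (List.ofFn fun j => g (c j)).prod := by
  rw [Set.mem_pow]
  constructor
  · rintro ⟨f, rfl⟩
    choose c hc using fun j => (f j).2
    exact ⟨c, by simp [hc]⟩
  · rintro ⟨c, rfl⟩
    exact ⟨fun j => ⟨g (c j), c j, rfl⟩, rfl⟩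

lemma finite_pow {s : Set (CForms n)} (hs : s.Finite) (p : ℕ) : (s ^ p).Finite := by
  induction p with
  | zero => simpa [pow_zero] using Set.finite_one
  | succ k ih => rw [pow_succ]; exact ih.mul hs

lemma cdu_eq_cOne (i : Fin n) : cdu i = cOne (Pi.single i 1) := by
  simp [cOne, Pi.single_apply, ite_smul]

lemma cdub_eq_cOneBar (i : Fin n) : cdub i = cOneBar (Pi.single i 1) := by
  simp [cOneBar, Pi.single_apply, ite_smul]

lemma span_range_cOne : Submodule.span ℂ (Set.range (cOne (n := n)))
    = Submodule.span ℂ (Set.range (cdu (n := n))) := by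
  apply le_antisymm
  · rw [Submodule.span_le]
    rintro x ⟨c, rfl⟩
    exact Submodule.sum_mem _ fun i _ =>
      Submodule.smul_mem _ _ (Submodule.subset_span ⟨i, rfl⟩)
  · rw [Submodule.span_le]
    rintro x ⟨i, rfl⟩
    exact Submodule.subset_span ⟨Pi.single i 1, (cdu_eq_cOne i).symm⟩

lemma span_range_cOneBar : Submodule.span ℂ (Set.range (cOneBar (n := n)))
    = Submodule.span ℂ (Set.range (cdub (n := n))) := by
  apply le_antisymm
  · rw [Submodule.span_le]
    rintro x ⟨c, rfl⟩
    exact Submodule.sum_mem _ fun i _ =>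
      Submodule.smul_mem _ _ (Submodule.subset_span ⟨i, rfl⟩)
  · rw [Submodule.span_le]
    rintro x ⟨i, rfl⟩
    exact Submodule.subset_span ⟨Pi.single i 1, (cdub_eq_cOneBar i).symm⟩

/-- `span {α ∧ iᾱ} = span{V*} * span{V̄*}` by polarization. -/
lemma span_hgen_eq :
    Submodule.span ℂ (Set.range (hgen (n := n)))
      = Submodule.span ℂ (Set.range cOne) * Submodule.span ℂ (Set.range cOneBar) := by
  have hdiag : ∀ c : Fin n → ℂ,
      cOne c * cConjOne c ∈ Submodule.span ℂ (Set.range (hgen (n := n))) := by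
    intro c
    have : cOne c * cConjOne c = (-Complex.I) • hgen c := by
      rw [hgen, mul_smul_comm, smul_smul]
      simp
    rw [this]
    exact Submodule.smul_mem _ _ (Submodule.subset_span ⟨c, rfl⟩)
  apply le_antisymm
  · rw [Submodule.span_le]
    rintro x ⟨c, rfl⟩
    exact Submodule.mul_mem_mul (Submodule.subset_span ⟨c, rfl⟩)
      (Submodule.smul_mem _ _ (Submodule.subset_span
        ⟨fun i => (starRingEnd ℂ) (c i), (cConjOne_eq_cOneBar c).symm⟩))
  · rw [Submodule.span_mul_span, Submodule.span_le]
    rintro x ⟨y, ⟨a, rfl⟩, z, ⟨b, rfl⟩, rfl⟩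
    rw [cOneBar_eq_cConjOne b]
    set b' : Fin n → ℂ := fun i => (starRingEnd ℂ) (b i) with hb'
    have h4 := polarization a b'
    have hmem : (4:ℂ) • (cOne a * cConjOne b') ∈
        Submodule.span ℂ (Set.range (hgen (n := n))) := by
      rw [h4]
      exact Submodule.sub_mem _ (Submodule.sub_mem _ (Submodule.add_mem _ (hdiag _)
        (Submodule.smul_mem _ _ (hdiag _))) (hdiag _)) (Submodule.smul_mem _ _ (hdiag _))
    have := Submodule.smul_mem (Submodule.span ℂ (Set.range (hgen (n := n)))) ((4:ℂ)⁻¹) hmem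
    rwa [smul_smul, inv_mul_cancel₀ (by norm_num), one_smul] at this

lemma span_comm :
    Submodule.span ℂ (Set.range (cOneBar (n := n))) * Submodule.span ℂ (Set.range cOne)
      = Submodule.span ℂ (Set.range cOne) * Submodule.span ℂ (Set.range cOneBar) := by
  rw [Submodule.span_mul_span, Submodule.span_mul_span]
  apply le_antisymm <;> rw [Submodule.span_le]
  · rintro x ⟨y, ⟨b, rfl⟩, z, ⟨a, rfl⟩, rfl⟩
    show cOneBar b * cOne a ∈ _
    rw [cOneBar_mul_cOne]
    exact Submodule.neg_mem _ (Submodule.subset_span ⟨cOne a, ⟨a, rfl⟩, cOneBar b, ⟨b, rfl⟩, rfl⟩)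
  · rintro x ⟨y, ⟨a, rfl⟩, z, ⟨b, rfl⟩, rfl⟩
    show cOne a * cOneBar b ∈ _
    rw [show cOne a * cOneBar b = -(cOneBar b * cOne a) by rw [cOneBar_mul_cOne, neg_neg]]
    exact Submodule.neg_mem _ (Submodule.subset_span ⟨cOneBar b, ⟨b, rfl⟩, cOne a, ⟨a, rfl⟩, rfl⟩)

lemma pow_span_comm (p : ℕ) :
    Submodule.span ℂ (Set.range (cOneBar (n := n))) ^ p * Submodule.span ℂ (Set.range cOne)
      = Submodule.span ℂ (Set.range cOne) * Submodule.span ℂ (Set.range cOneBar) ^ p := by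
  induction p with
  | zero => rw [pow_zero, one_mul, mul_one]

  | succ k ih =>
    rw [pow_succ, mul_assoc, span_comm, ← mul_assoc, ih, mul_assoc, ← pow_succ]

lemma mul_pow_eq (p : ℕ) :
    (Submodule.span ℂ (Set.range (cOne (n := n))) * Submodule.span ℂ (Set.range cOneBar)) ^ p
      = Submodule.span ℂ (Set.range cOne) ^ p * Submodule.span ℂ (Set.range cOneBar) ^ p := by
  induction p with
  | zero => rw [pow_zero, pow_zero, pow_zero, one_mul]
  | succ k ih =>
    rw [pow_succ, ih, pow_succ, pow_succ, mul_assoc, ← mul_assoc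
      (Submodule.span ℂ (Set.range cOneBar) ^ k), pow_span_comm, mul_assoc, mul_assoc]

lemma cFormsPQ_eq (p : ℕ) :
    CFormsPQ n p p
      = Submodule.span ℂ (Set.range (cOne (n := n))) ^ p
        * Submodule.span ℂ (Set.range cOneBar) ^ p := by
  rw [Submodule.span_pow, Submodule.span_pow, Submodule.span_mul_span, CFormsPQ]
  congr 1
  ext x
  simp only [Set.mem_setOf_eq, Set.mem_mul]
  constructor
  · rintro ⟨a, b, rfl⟩
    exact ⟨cDecomp a, mem_pow_range.2 ⟨a, rfl⟩,
      (List.ofFn fun j => cOneBar (b j)).prod, mem_pow_range.2 ⟨b, rfl⟩, rfl⟩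
  · rintro ⟨y, hy, z, hz, rfl⟩
    obtain ⟨a, rfl⟩ := mem_pow_range.1 hy
    obtain ⟨b, rfl⟩ := mem_pow_range.1 hz
    exact ⟨a, b, rfl⟩

lemma span_strongGen_eq (p : ℕ) :
    Submodule.span ℂ (cStrongGen n p) = CFormsPQ n p p := by
  have hset : cStrongGen n p = Set.range (hgen (n := n)) ^ p := by
    ext x
    rw [mem_pow_range]
    rfl
  rw [hset, ← Submodule.span_pow, span_hgen_eq, mul_pow_eq, cFormsPQ_eq]

lemma strongGen_subset_strongPos (p : ℕ) : cStrongGen n p ⊆ cStrongPos n p := by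
  intro x hx
  exact ⟨1, fun _ => 1, fun _ => x, fun _ => zero_le_one, fun _ => hx, by simp⟩

def wSet (n p : ℕ) : Set (CForms n) :=
  (Set.range (cdu (n := n))) ^ p * (Set.range (cdub (n := n))) ^ p

lemma wSet_finite (p : ℕ) : (wSet n p).Finite :=
  (finite_pow (Set.finite_range _) p).mul (finite_pow (Set.finite_range _) p)

lemma cFormsPQ_le_span_wSet (p : ℕ) :
    CFormsPQ n p p ≤ Submodule.span ℂ (wSet n p) := by
  rw [cFormsPQ_eq, span_range_cOne, span_range_cOneBar, wSet,
    ← Submodule.span_mul_span, ← Submodule.span_pow, ← Submodule.span_pow]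

end SPaux

/-- Lemma 2.5; Demailly III.1.4. For every `p ≥ 0`, the complex vector
space `Λ^{p,p}V*` admits a `ℂ`-basis consisting of strongly positive forms: there is a
finite family of strongly positive forms that is `ℂ`-linearly independent and spans
`Λ^{p,p}V*` over `ℂ`. -/
theorem exists_basis_of_stronglyPositive_forms (n p : ℕ) :
    ∃ (m : ℕ) (b : Fin m → CForms n),
      (∀ k, b k ∈ cStrongPos n p) ∧ LinearIndependent ℂ b ∧
        Submodule.span ℂ (Set.range b) = CFormsPQ n p p := by
  classical
  obtain ⟨b, hbsub, hbspan, hbli⟩ := exists_linearIndependent ℂ (cStrongGen n p)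
  rw [SPaux.span_strongGen_eq] at hbspan
  -- the set `b` is finite
  haveI : Finite ↥(SPaux.wSet n p) := (SPaux.wSet_finite p).to_subtype
  haveI : Finite ↥b := by
    refine hbli.finite_of_le_span_finite _ (SPaux.wSet n p) ?_
    rw [Subtype.range_coe]
    intro x hx
    exact SPaux.cFormsPQ_le_span_wSet p (hbspan ▸ Submodule.subset_span hx)
  haveI : Fintype ↥b := Fintype.ofFinite _
  refine ⟨Fintype.card ↥b, fun k => ((Fintype.equivFin ↥b).symm k : CForms n), ?_, ?_, ?_⟩
  · intro k
    exact SPaux.strongGen_subset_strongPos p (hbsub ((Fintype.equivFin ↥b).symm k).2)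
  · exact hbli.comp _ (Equiv.injective _)
  · have hrange : Set.range (fun k => (((Fintype.equivFin ↥b).symm k : ↥b) : CForms n)) = b := by
      rw [show (fun k => (((Fintype.equivFin ↥b).symm k : ↥b) : CForms n))
          = Subtype.val ∘ (Fintype.equivFin ↥b).symm from rfl, Set.range_comp,
        Equiv.range_eq_univ, Set.image_univ, Subtype.range_coe]
    rw [hrange, hbspan]
end
end

section
/- The embedding ι: Λ^{·,·}V' → Λ^{·,·}V* satisfies: (1) its image is exactly the set of F-invariant elements of Λ^{·,·}V*; (2) for every degree-one element ξ ∈ V' ⊕ V'', one has ι(J(ξ)) = i·σ(ι(ξ)); (3) a Lagerberg form ω ∈ Λ^{p,p}V' is symmetric if and only if ι(ω) is real; (4) ι(τ_n) = ω_n. -/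
/- Setup: `V = ℝⁿ` with its standard basis, `V_ℂ` its complexification,
`V* = Hom_ℝ(V,ℂ)` and `V̄*` the antilinear maps `V_ℂ → ℂ`.  The bigraded exterior algebra
`Λ^{·,·}V* = Λ_ℂ(V* ⊕ V̄*)` is modeled as the exterior algebra over `ℂ` of the free
complex module on the `2n` generators `du_1,…,du_n` (first summand) and
`dū_1,…,dū_n` (second summand). -/

noncomputable section
set_option maxHeartbeats 1000000
set_option synthInstance.maxHeartbeats 400000
open ExteriorAlgebra

/-- The algebra `Λ^{·,·}V' = Λ_ℝ(V' ⊕ V'')` of Lagerberg forms for `V = ℝⁿ`. -/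
abbrev LForms (n : ℕ) : Type := ExteriorAlgebra ℝ ((Fin n ⊕ Fin n) → ℝ)

/-- The basis element `d'u_i` of `V'`. -/
def ldu {n : ℕ} (i : Fin n) : LForms n := ExteriorAlgebra.ι ℝ (Pi.single (Sum.inl i) (1 : ℝ))

/-- The basis element `d''u_i` of `V''`. -/
def lddu {n : ℕ} (i : Fin n) : LForms n := ExteriorAlgebra.ι ℝ (Pi.single (Sum.inr i) (1 : ℝ))

/-- A general element `Σ cᵢ • d'u_i` of `V'`. -/
def lOne {n : ℕ} (c : Fin n → ℝ) : LForms n := ∑ i, c i • ldu i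

/-- A general element `Σ cᵢ • d''u_i` of `V''`; note `J(Σ cᵢ d'u_i) = Σ cᵢ d''u_i`. -/
def lOne'' {n : ℕ} (c : Fin n → ℝ) : LForms n := ∑ i, c i • lddu i

/-- A decomposable `(p,0)`-form `α₁ ∧ … ∧ α_p` with `α_j ∈ V'`. -/
def lDecomp {n p : ℕ} (c : Fin p → Fin n → ℝ) : LForms n := (List.ofFn fun j => lOne (c j)).prod

/-- Its image `J(α₁) ∧ … ∧ J(α_p)` under the Lagerberg involution. -/
def lDecomp'' {n p : ℕ} (c : Fin p → Fin n → ℝ) : LForms n :=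
  (List.ofFn fun j => lOne'' (c j)).prod

/-- `Λ^{p,q}V'`: the span of products of `p` elements of `V'` and `q` elements of `V''`. -/
def LFormsPQ (n p q : ℕ) : Submodule ℝ (LForms n) :=
  Submodule.span ℝ { x | ∃ (a : Fin p → Fin n → ℝ) (b : Fin q → Fin n → ℝ),
    x = lDecomp a * lDecomp'' b }

/-- The convex cone generated by a set `S` (nonnegative real coefficients). -/
def lCone {n : ℕ} (S : Set (LForms n)) : Set (LForms n) :=
  { x | ∃ (m : ℕ) (t : Fin m → ℝ) (y : Fin m → LForms n),
      (∀ k, 0 ≤ t k) ∧ (∀ k, y k ∈ S) ∧ x = ∑ k, t k • y k }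

/-- The generators `α₁ ∧ J(α₁) ∧ … ∧ α_p ∧ J(α_p)` (`α_j ∈ V'`) of the strongly positive
cone. -/
def lStrongGen (n p : ℕ) : Set (LForms n) :=
  { x | ∃ c : Fin p → Fin n → ℝ, x = (List.ofFn fun j => lOne (c j) * lOne'' (c j)).prod }

/-- The cone `Λ^{p,p}_{+,s}V'` of strongly positive Lagerberg `(p,p)`-forms. -/
def lStrongPos (n p : ℕ) : Set (LForms n) := lCone (lStrongGen n p)

/-- The generators `(-1)^{p(p-1)/2} α ∧ J(α)` (`α ∈ Λ^{p,0}V'`, written as a sum of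
decomposables) of the positive cone. -/
def lPosGen (n p : ℕ) : Set (LForms n) :=
  { x | ∃ (m : ℕ) (c : Fin m → Fin p → Fin n → ℝ),
      x = ((-1 : ℝ)) ^ (p * (p - 1) / 2) • ((∑ l, lDecomp (c l)) * (∑ l, lDecomp'' (c l))) }

/-- The cone `Λ^{p,p}_{+}V'` of positive Lagerberg `(p,p)`-forms. -/
def lPos (n p : ℕ) : Set (LForms n) := lCone (lPosGen n p)

/-- The Lagerberg orientation form `τ_n = d'u_1 ∧ d''u_1 ∧ … ∧ d'u_n ∧ d''u_n`. -/
def lTauTop (n : ℕ) : LForms n := (List.ofFn fun i : Fin n => ldu i * lddu i).prod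

/-- `J` is the Lagerberg involution: the (unique) ℝ-algebra automorphism of `Λ^{·,·}V'`
with `J(d'u_i) = d''u_i` and `J(d''u_i) = d'u_i`. -/
structure IsLagerbergJ (n : ℕ) (J : LForms n → LForms n) : Prop where
  map_add : ∀ x y, J (x + y) = J x + J y
  map_smul : ∀ (c : ℝ) (x), J (c • x) = c • J x
  map_mul : ∀ x y, J (x * y) = J x * J y
  map_one : J 1 = 1
  map_du : ∀ i : Fin n, J (ldu i) = lddu i
  map_ddu : ∀ i : Fin n, J (lddu i) = ldu i

/-- The set `Λ^{p,p}_{sym}V'` of symmetric Lagerberg `(p,p)`-forms: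
those with `J(ω) = (-1)^p ω`. -/
def lSym (n p : ℕ) (J : LForms n → LForms n) : Set (LForms n) :=
  { x | x ∈ LFormsPQ n p p ∧ J x = ((-1 : ℝ)) ^ p • x }

/-- The set `Λ^{p,p}_{+,w}V'` of weakly positive Lagerberg `(p,p)`-forms: symmetric
`(p,p)`-forms `ω` such that for every strongly positive `η` of type `(n-p,n-p)` there is a
real `γ ≥ 0` with `ω ∧ η = γ τ_n`. -/
def lWeakPos (n p : ℕ) (J : LForms n → LForms n) : Set (LForms n) :=
  { x | x ∈ lSym n p J ∧
      ∀ η ∈ lStrongPos n (n - p), ∃ γ : ℝ, 0 ≤ γ ∧ x * η = γ • lTauTop n }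

/-- `ι` is the canonical embedding `Λ^{·,·}V' → Λ^{·,·}V*`: the (unique) ℝ-algebra
homomorphism with `ι(d'u_j) = du_j` and `ι(d''u_j) = i dū_j`.  Its image is the set of
`F`-invariant complex forms. -/
structure IsIota (n : ℕ) (ι : LForms n → CForms n) : Prop where
  map_add : ∀ x y, ι (x + y) = ι x + ι y
  map_smul : ∀ (c : ℝ) (x), ι (c • x) = (c : ℂ) • ι x
  map_mul : ∀ x y, ι (x * y) = ι x * ι y
  map_one : ι 1 = 1
  map_du : ∀ i : Fin n, ι (ldu i) = cdu i
  map_ddu : ∀ i : Fin n, ι (lddu i) = Complex.I • cdub i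


/-! ### Auxiliary material for the proof -/

section IotaAux

open TensorProduct

noncomputable local instance : Invertible (2 : ℝ) := invertibleOfNonzero two_ne_zero

/-- Generic: an additive map preserves finite sums. -/
theorem map_sum_of {β γ : Type*} [AddCommMonoid β] [AddCommMonoid γ] {f : β → γ}
    (h0 : f 0 = 0) (hadd : ∀ x y, f (x + y) = f x + f y)
    {α : Type*} (s : Finset α) (g : α → β) :
    f (∑ i ∈ s, g i) = ∑ i ∈ s, f (g i) := by
  classical
  induction s using Finset.induction_on with
  | empty => simpa using h0
  | insert _ _ h ih => rw [Finset.sum_insert h, Finset.sum_insert h, hadd, ih]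

/-- Generic: a multiplicative unital map preserves list products. -/
theorem map_listProd_of {β γ : Type*} [Monoid β] [Monoid γ] {f : β → γ}
    (h1 : f 1 = 1) (hmul : ∀ x y, f (x * y) = f x * f y) :
    ∀ l : List β, f l.prod = (l.map f).prod
  | [] => by simpa using h1
  | x :: l => by
      rw [List.prod_cons, hmul, map_listProd_of h1 hmul l, List.map_cons, List.prod_cons]

theorem ext_pi_expand {R : Type*} [CommRing R] {κ : Type*} [Fintype κ] [DecidableEq κ]
    (v : κ → R) : v = ∑ j, v j • (Pi.single j (1 : R) : κ → R) := by
  have h2 : ∀ j : κ, v j • (Pi.single j (1 : R) : κ → R) = (Pi.single j (v j) : κ → R) := by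
    intro j
    rw [← Pi.single_smul', smul_eq_mul, mul_one]
  rw [Finset.sum_congr rfl fun j _ => h2 j, Finset.univ_sum_single]

theorem ext_iota_expand {R : Type*} [CommRing R] {κ : Type*} [Fintype κ] [DecidableEq κ]
    (v : κ → R) :
    ExteriorAlgebra.ι R v = ∑ j, v j • ExteriorAlgebra.ι R (Pi.single j (1 : R)) := by
  conv_lhs => rw [ext_pi_expand v]
  rw [map_sum]
  simp

variable (n : ℕ)

/-- The real-linear map sending `e_{inl i} ↦ e_{inl i}` and `e_{inr i} ↦ I • e_{inr i}`. -/
def gmap : ((Fin n ⊕ Fin n) → ℝ) →ₗ[ℝ] ((Fin n ⊕ Fin n) → ℂ) where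
  toFun v j := Sum.elim (fun _ => (1 : ℂ)) (fun _ => Complex.I) j * (v j : ℂ)
  map_add' x y := by funext j; push_cast [Pi.add_apply]; ring
  map_smul' r x := by
    funext j
    simp only [Pi.smul_apply, smul_eq_mul, RingHom.id_apply, Complex.real_smul]
    push_cast
    ring

theorem gmap_apply (v : (Fin n ⊕ Fin n) → ℝ) (j) :
    gmap n v j = Sum.elim (fun _ => (1 : ℂ)) (fun _ => Complex.I) j * (v j : ℂ) := rfl

theorem gmap_single_inl (i : Fin n) :
    gmap n (Pi.single (Sum.inl i) (1 : ℝ)) = Pi.single (Sum.inl i) (1 : ℂ) := by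
  funext k
  rcases eq_or_ne k (Sum.inl i) with rfl | hk
  · simp [gmap_apply]
  · simp [gmap_apply, Pi.single_eq_of_ne hk]

theorem gmap_single_inr (i : Fin n) :
    gmap n (Pi.single (Sum.inr i) (1 : ℝ)) = Complex.I • (Pi.single (Sum.inr i) (1 : ℂ) : (Fin n ⊕ Fin n) → ℂ) := by
  funext k
  rcases eq_or_ne k (Sum.inr i) with rfl | hk
  · simp [gmap_apply]
  · simp [gmap_apply, Pi.single_eq_of_ne hk]

/-- `gmap` base-changed to a `ℂ`-linear map. -/
noncomputable def fmap : (ℂ ⊗[ℝ] ((Fin n ⊕ Fin n) → ℝ)) →ₗ[ℂ] ((Fin n ⊕ Fin n) → ℂ) :=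
  (gmap n).liftBaseChange ℂ

/-- An explicit `ℂ`-linear inverse to `fmap`. -/
noncomputable def fmap' : ((Fin n ⊕ Fin n) → ℂ) →ₗ[ℂ] (ℂ ⊗[ℝ] ((Fin n ⊕ Fin n) → ℝ)) where
  toFun v := ∑ j, (Sum.elim (fun _ => (1 : ℂ)) (fun _ => -Complex.I) j * v j) •
      ((1 : ℂ) ⊗ₜ[ℝ] Pi.single j (1 : ℝ))
  map_add' x y := by
    simp only [Pi.add_apply, mul_add, add_smul]
    rw [Finset.sum_add_distrib]
  map_smul' c x := by
    simp only [Pi.smul_apply, smul_eq_mul, RingHom.id_apply, Finset.smul_sum, smul_smul]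
    exact Finset.sum_congr rfl fun j _ => by rw [mul_left_comm]

theorem fmap'_apply (v : (Fin n ⊕ Fin n) → ℂ) :
    fmap' n v = ∑ j, (Sum.elim (fun _ => (1 : ℂ)) (fun _ => -Complex.I) j * v j) •
      ((1 : ℂ) ⊗ₜ[ℝ] Pi.single j (1 : ℝ)) := rfl

theorem fmap'_gmap (v : (Fin n ⊕ Fin n) → ℝ) :
    fmap' n (gmap n v) = (1 : ℂ) ⊗ₜ[ℝ] v := by
  have h1 : ∀ j, Sum.elim (fun _ => (1 : ℂ)) (fun _ => -Complex.I) j * gmap n v j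
      = (v j : ℂ) := by
    rintro (i | i)
    · simp [gmap_apply]
    · simp only [gmap_apply, Sum.elim_inr]
      rw [← mul_assoc, neg_mul, Complex.I_mul_I, neg_neg, one_mul]
  rw [fmap'_apply]
  have h2 : ∀ j : Fin n ⊕ Fin n,
      (Sum.elim (fun _ => (1 : ℂ)) (fun _ => -Complex.I) j * gmap n v j) •
        ((1 : ℂ) ⊗ₜ[ℝ] Pi.single j (1 : ℝ))
      = (1 : ℂ) ⊗ₜ[ℝ] (v j • (Pi.single j (1 : ℝ) : (Fin n ⊕ Fin n) → ℝ)) := by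
    intro j
    rw [h1 j, tmul_smul, ← Complex.coe_algebraMap, algebraMap_smul]
  rw [Finset.sum_congr rfl fun j _ => h2 j, ← tmul_sum]
  congr 1
  have h3 : ∀ j : Fin n ⊕ Fin n, v j • (Pi.single j (1 : ℝ) : (Fin n ⊕ Fin n) → ℝ) = (Pi.single j (v j) : (Fin n ⊕ Fin n) → ℝ) := by
    intro j; rw [← Pi.single_smul', smul_eq_mul, mul_one]
  rw [Finset.sum_congr rfl fun j _ => h3 j, Finset.univ_sum_single]

theorem fmap'_fmap (x : ℂ ⊗[ℝ] ((Fin n ⊕ Fin n) → ℝ)) : fmap' n (fmap n x) = x := by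
  induction x with
  | zero => rw [map_zero, map_zero]
  | tmul c v =>
      rw [fmap, LinearMap.liftBaseChange_tmul, map_smul, fmap'_gmap, smul_tmul', smul_eq_mul,
        mul_one]
  | add x y hx hy => rw [map_add, map_add, hx, hy]

theorem Qb_apply_eq_zero (x : ℂ ⊗[ℝ] ((Fin n ⊕ Fin n) → ℝ)) :
    (QuadraticForm.baseChange ℂ (0 : QuadraticForm ℝ ((Fin n ⊕ Fin n) → ℝ))) x = 0 := by
  have h : (QuadraticForm.baseChange ℂ (0 : QuadraticForm ℝ ((Fin n ⊕ Fin n) → ℝ)))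
      = (0 : QuadraticForm ℂ (ℂ ⊗[ℝ] ((Fin n ⊕ Fin n) → ℝ))) := by
    apply baseChange_ext
    intro m
    simp
  rw [h]
  rfl

/-- From the Clifford algebra of the base-changed (zero) form to `CForms n`. -/
noncomputable def g3 :
    CliffordAlgebra
      (QuadraticForm.baseChange ℂ (0 : QuadraticForm ℝ ((Fin n ⊕ Fin n) → ℝ))) →ₐ[ℂ]
      CForms n :=
  CliffordAlgebra.lift _
    ⟨(ExteriorAlgebra.ι ℂ).comp (fmap n), fun x => by
      rw [LinearMap.comp_apply, ExteriorAlgebra.ι_sq_zero, Qb_apply_eq_zero, map_zero]⟩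

/-- Back from `CForms n` to the Clifford algebra of the base-changed form. -/
noncomputable def rho3 :
    CForms n →ₐ[ℂ]
      CliffordAlgebra
        (QuadraticForm.baseChange ℂ (0 : QuadraticForm ℝ ((Fin n ⊕ Fin n) → ℝ))) :=
  CliffordAlgebra.lift (0 : QuadraticForm ℂ ((Fin n ⊕ Fin n) → ℂ))
    ⟨(CliffordAlgebra.ι _).comp (fmap' n), fun x => by
      rw [LinearMap.comp_apply, CliffordAlgebra.ι_sq_scalar, Qb_apply_eq_zero, map_zero,
        QuadraticMap.zero_apply, map_zero]⟩

theorem rho3_g3 (x) : rho3 n (g3 n x) = x := by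
  suffices h : (rho3 n).comp (g3 n) = AlgHom.id ℂ _ by
    have := DFunLike.congr_fun h x
    simpa using this
  apply CliffordAlgebra.hom_ext
  apply LinearMap.ext
  intro v
  simp only [AlgHom.toLinearMap_apply, LinearMap.comp_apply, AlgHom.comp_apply,
    AlgHom.id_apply]
  rw [g3, CliffordAlgebra.lift_ι_apply, LinearMap.comp_apply]
  rw [rho3, CliffordAlgebra.lift_ι_apply, LinearMap.comp_apply, fmap'_fmap]

/-- The canonical model of the embedding `ι`. -/
noncomputable def iota0 : LForms n → CForms n := fun x =>
  g3 n (CliffordAlgebra.ofBaseChange ℂ (0 : QuadraticForm ℝ ((Fin n ⊕ Fin n) → ℝ))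
    ((1 : ℂ) ⊗ₜ[ℝ] x))

theorem iota0_one : iota0 n 1 = 1 := by
  rw [iota0, CliffordAlgebra.ofBaseChange_tmul_one, map_one, map_one]

theorem iota0_add (x y : LForms n) : iota0 n (x + y) = iota0 n x + iota0 n y := by
  rw [iota0, iota0, iota0, tmul_add, map_add, map_add]

theorem iota0_mul (x y : LForms n) : iota0 n (x * y) = iota0 n x * iota0 n y := by
  rw [iota0, iota0, iota0, ← map_mul, ← map_mul, Algebra.TensorProduct.tmul_mul_tmul, one_mul]

theorem iota0_smul (r : ℝ) (x : LForms n) : iota0 n (r • x) = (r : ℂ) • iota0 n x := by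
  rw [iota0, iota0, tmul_smul, ← Complex.coe_algebraMap, ← algebraMap_smul ℂ r
    ((1 : ℂ) ⊗ₜ[ℝ] x), map_smul, map_smul, Complex.coe_algebraMap]

theorem iota0_gen (m : (Fin n ⊕ Fin n) → ℝ) :
    iota0 n (ExteriorAlgebra.ι ℝ m) = ExteriorAlgebra.ι ℂ (gmap n m) := by
  rw [iota0, CliffordAlgebra.ofBaseChange_tmul_ι, g3, CliffordAlgebra.lift_ι_apply,
    LinearMap.comp_apply, fmap, LinearMap.liftBaseChange_tmul, one_smul]

theorem iota0_inj : Function.Injective (iota0 n) := by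
  intro x y h
  simp only [iota0] at h
  have h2 := congrArg (rho3 n) h
  rw [rho3_g3, rho3_g3] at h2
  have h3 := congrArg (CliffordAlgebra.toBaseChange ℂ
    (0 : QuadraticForm ℝ ((Fin n ⊕ Fin n) → ℝ))) h2
  rw [CliffordAlgebra.toBaseChange_ofBaseChange, CliffordAlgebra.toBaseChange_ofBaseChange] at h3
  have h5 : ∀ z : LForms n,
      TensorProduct.lid ℝ (LForms n)
        (LinearMap.rTensor (LForms n) Complex.reLm ((1 : ℂ) ⊗ₜ[ℝ] z)) = z := by
    intro z
    rw [LinearMap.rTensor_tmul, TensorProduct.lid_tmul]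
    simp
  have h4 := congrArg (fun w => TensorProduct.lid ℝ (LForms n)
    (LinearMap.rTensor (LForms n) Complex.reLm w)) h3
  simpa only [h5] using h4

end IotaAux

section AbstractMaps

variable {n : ℕ}

theorem IsIota.map_zero {ι : LForms n → CForms n} (hι : IsIota n ι) : ι 0 = 0 := by
  have := hι.map_smul 0 0
  simpa using this

theorem IsIota.map_neg {ι : LForms n → CForms n} (hι : IsIota n ι) (x : LForms n) :
    ι (-x) = -ι x := by
  have := hι.map_smul (-1) x
  simpa using this

theorem IsIota.map_sub {ι : LForms n → CForms n} (hι : IsIota n ι) (x y : LForms n) :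
    ι (x - y) = ι x - ι y := by
  rw [sub_eq_add_neg, hι.map_add, hι.map_neg, sub_eq_add_neg]

theorem IsConjugation.map_zero {σ : CForms n → CForms n} (hσ : IsConjugation n σ) : σ 0 = 0 := by
  have := hσ.map_smul 0 0
  simpa using this

theorem IsFInvolution.map_zero {F : CForms n → CForms n} (hF : IsFInvolution n F) : F 0 = 0 := by
  have := hF.map_smul 0 0
  simpa using this

theorem IsLagerbergJ.map_zero {J : LForms n → LForms n} (hJ : IsLagerbergJ n J) : J 0 = 0 := by
  have := hJ.map_smul 0 0
  simpa using this

/-- `ι` on degree-one generators. -/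
theorem IsIota.map_gen {ι : LForms n → CForms n} (hι : IsIota n ι)
    (m : (Fin n ⊕ Fin n) → ℝ) :
    ι (ExteriorAlgebra.ι ℝ m) = ExteriorAlgebra.ι ℂ (gmap n m) := by
  have key : ∀ j : Fin n ⊕ Fin n,
      ι (ExteriorAlgebra.ι ℝ (Pi.single j (1 : ℝ) : (Fin n ⊕ Fin n) → ℝ))
        = ExteriorAlgebra.ι ℂ (gmap n (Pi.single j (1 : ℝ) : (Fin n ⊕ Fin n) → ℝ)) := by
    rintro (i | i)
    · rw [gmap_single_inl]; exact hι.map_du i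
    · rw [gmap_single_inr, LinearMap.map_smul]; exact hι.map_ddu i
  conv_lhs => rw [ext_iota_expand m]
  rw [map_sum_of hι.map_zero hι.map_add]
  conv_rhs => rw [ext_pi_expand m]
  rw [map_sum, map_sum]
  refine Finset.sum_congr rfl fun j _ => ?_
  rw [hι.map_smul, key j, LinearMap.map_smul, LinearMap.map_smul_of_tower, ← Complex.coe_algebraMap,
    algebraMap_smul]
  rfl

theorem IsIota.eq_iota0 {ι : LForms n → CForms n} (hι : IsIota n ι) (x : LForms n) :
    ι x = iota0 n x := by
  induction x using ExteriorAlgebra.induction with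
  | algebraMap r =>
      rw [Algebra.algebraMap_eq_smul_one, hι.map_smul, hι.map_one, iota0_smul,
        iota0_one]
  | ι v => rw [hι.map_gen, iota0_gen]
  | mul a b ha hb => rw [hι.map_mul, ha, hb, iota0_mul]
  | add a b ha hb => rw [hι.map_add, ha, hb, iota0_add]

theorem IsIota.injective {ι : LForms n → CForms n} (hι : IsIota n ι) :
    Function.Injective ι := by
  have h : ι = iota0 n := funext hι.eq_iota0
  rw [h]
  exact iota0_inj n

end AbstractMaps


theorem lexpand {n : ℕ} (v : (Fin n ⊕ Fin n) → ℝ) :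
    ExteriorAlgebra.ι ℝ v = ∑ j, v j • Sum.elim (ldu (n := n)) (lddu (n := n)) j := by
  rw [ext_iota_expand v]
  refine Finset.sum_congr rfl fun j _ => ?_
  rcases j with i | i <;> rfl

theorem negI_mul_mul_I (x : ℂ) : -Complex.I * (x * Complex.I) = x := by
  rw [mul_comm x, ← mul_assoc, neg_mul, Complex.I_mul_I, neg_neg, one_mul]

section Abstract2

variable {n : ℕ} {σ F : CForms n → CForms n} {J : LForms n → LForms n}
  {ι : LForms n → CForms n}

theorem IsFInvolution.fix_iota (hF : IsFInvolution n F) (hι : IsIota n ι) (y : LForms n) :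
    F (ι y) = ι y := by
  induction y using ExteriorAlgebra.induction with
  | algebraMap r =>
      rw [Algebra.algebraMap_eq_smul_one, hι.map_smul, hι.map_one, hF.map_smul,
        Complex.conj_ofReal, hF.map_one]
  | ι v =>
      rw [lexpand v, map_sum_of hι.map_zero hι.map_add, map_sum_of hF.map_zero hF.map_add]
      refine Finset.sum_congr rfl fun j _ => ?_
      rw [hι.map_smul, hF.map_smul, Complex.conj_ofReal]
      congr 1
      rcases j with i | i
      · simp only [Sum.elim_inl]
        rw [hι.map_du, hF.map_du]
      · simp only [Sum.elim_inr]
        rw [hι.map_ddu, hF.map_smul, Complex.conj_I, hF.map_dub, smul_neg, neg_smul, neg_neg]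
  | mul a b ha hb => rw [hι.map_mul, hF.map_mul, ha, hb]
  | add a b ha hb => rw [hι.map_add, hF.map_add, ha, hb]

theorem decomp_smul_aux (cr ci : ℝ) (x y : CForms n) :
    ((cr : ℂ) + (ci : ℂ) * Complex.I) • (x + Complex.I • y)
      = ((cr : ℂ) • x - (ci : ℂ) • y)
        + Complex.I • (((ci : ℂ)) • x + ((cr : ℂ)) • y) := by
  have hI : ((cr : ℂ) + (ci : ℂ) * Complex.I) * Complex.I
      = Complex.I * (cr : ℂ) - (ci : ℂ) := by
    rw [add_mul, mul_assoc, Complex.I_mul_I]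
    ring
  rw [smul_add, smul_smul, hI, smul_add, smul_smul, smul_smul, add_smul, sub_smul,
    mul_comm ((ci : ℂ)) Complex.I]
  abel

theorem IsIota.exists_decomp (hι : IsIota n ι) (x : CForms n) :
    ∃ a b : LForms n, x = ι a + Complex.I • ι b := by
  have hsmul : ∀ (c : ℂ) (a b : LForms n), ∃ a' b' : LForms n,
      c • (ι a + Complex.I • ι b) = ι a' + Complex.I • ι b' := by
    intro c a b
    refine ⟨c.re • a - c.im • b, c.im • a + c.re • b, ?_⟩
    have key := decomp_smul_aux (n := n) c.re c.im (ι a) (ι b)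
    rw [Complex.re_add_im] at key
    rw [key, hι.map_sub, hι.map_smul, hι.map_smul, hι.map_add, hι.map_smul, hι.map_smul]
  induction x using ExteriorAlgebra.induction with
  | algebraMap c =>
      refine ⟨algebraMap ℝ _ c.re, algebraMap ℝ _ c.im, ?_⟩
      rw [Algebra.algebraMap_eq_smul_one (A := LForms n),
        Algebra.algebraMap_eq_smul_one (A := LForms n), hι.map_smul, hι.map_smul, hι.map_one,
        Algebra.algebraMap_eq_smul_one (A := CForms n), smul_smul, ← add_smul]
      congr 1
      rw [mul_comm]
      exact (Complex.re_add_im c).symm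
  | ι v =>
      have hgen : ∀ j : Fin n ⊕ Fin n, ∃ a b : LForms n,
          ExteriorAlgebra.ι ℂ (Pi.single j (1 : ℂ) : (Fin n ⊕ Fin n) → ℂ)
            = ι a + Complex.I • ι b := by
        rintro (i | i)
        · exact ⟨ldu i, 0, by rw [hι.map_du, hι.map_zero, smul_zero, add_zero]; rfl⟩
        · refine ⟨0, -lddu i, ?_⟩
          rw [hι.map_zero, hι.map_neg, hι.map_ddu, zero_add, smul_neg, smul_smul,
            Complex.I_mul_I, neg_smul, neg_neg, one_smul]
          rfl
      rw [ext_iota_expand v]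
      have : ∀ s : Finset (Fin n ⊕ Fin n), ∃ a b : LForms n,
          ∑ j ∈ s, v j • ExteriorAlgebra.ι ℂ (Pi.single j (1 : ℂ) : (Fin n ⊕ Fin n) → ℂ)
            = ι a + Complex.I • ι b := by
        intro s
        classical
        induction s using Finset.induction_on with
        | empty =>
            exact ⟨0, 0, by rw [Finset.sum_empty, hι.map_zero, smul_zero, add_zero]⟩
        | @insert j s hj ih =>
            obtain ⟨a, b, hab⟩ := ih
            obtain ⟨a1, b1, h1⟩ := hgen j
            obtain ⟨a2, b2, h2⟩ := hsmul (v j) a1 b1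
            refine ⟨a2 + a, b2 + b, ?_⟩
            rw [Finset.sum_insert hj, hab, h1, h2, hι.map_add, hι.map_add, smul_add]
            abel
      exact this Finset.univ
  | mul x y hx hy =>
      obtain ⟨a, b, rfl⟩ := hx
      obtain ⟨c, d, rfl⟩ := hy
      refine ⟨a * c - b * d, a * d + b * c, ?_⟩
      rw [hι.map_sub, hι.map_mul, hι.map_mul, hι.map_add, hι.map_mul, hι.map_mul]
      rw [add_mul, mul_add, mul_add, smul_mul_assoc, mul_smul_comm, mul_smul_comm,
        smul_mul_assoc, smul_smul, Complex.I_mul_I, neg_one_smul, smul_add]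
      abel
  | add x y hx hy =>
      obtain ⟨a, b, rfl⟩ := hx
      obtain ⟨c, d, rfl⟩ := hy
      refine ⟨a + c, b + d, ?_⟩
      rw [hι.map_add, hι.map_add, smul_add]
      abel

theorem sigma_iota_lOne (hσ : IsConjugation n σ) (hJ : IsLagerbergJ n J) (hι : IsIota n ι)
    (c : Fin n → ℝ) :
    σ (ι (lOne c)) = (-Complex.I) • ι (J (lOne c)) := by
  have hJl : J (lOne c) = lOne'' c := by
    rw [lOne, map_sum_of hJ.map_zero hJ.map_add, lOne'']
    exact Finset.sum_congr rfl fun i _ => by rw [hJ.map_smul, hJ.map_du]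
  rw [hJl, lOne, lOne'', map_sum_of hι.map_zero hι.map_add, map_sum_of hι.map_zero hι.map_add,
    map_sum_of hσ.map_zero hσ.map_add, Finset.smul_sum]
  refine Finset.sum_congr rfl fun i _ => ?_
  rw [hι.map_smul, hι.map_du, hσ.map_smul, Complex.conj_ofReal, hσ.map_du, hι.map_smul,
    hι.map_ddu, smul_smul, smul_smul, mul_assoc, negI_mul_mul_I]

theorem sigma_iota_lOne'' (hσ : IsConjugation n σ) (hJ : IsLagerbergJ n J) (hι : IsIota n ι)
    (c : Fin n → ℝ) :
    σ (ι (lOne'' c)) = (-Complex.I) • ι (J (lOne'' c)) := by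
  have hJl : J (lOne'' c) = lOne c := by
    rw [lOne'', map_sum_of hJ.map_zero hJ.map_add, lOne]
    exact Finset.sum_congr rfl fun i _ => by rw [hJ.map_smul, hJ.map_ddu]
  rw [hJl, lOne, lOne'', map_sum_of hι.map_zero hι.map_add, map_sum_of hι.map_zero hι.map_add,
    map_sum_of hσ.map_zero hσ.map_add, Finset.smul_sum]
  refine Finset.sum_congr rfl fun i _ => ?_
  rw [hι.map_smul, hι.map_ddu, hσ.map_smul, Complex.conj_ofReal, hσ.map_smul, Complex.conj_I,
    hσ.map_dub, hι.map_smul, hι.map_du, smul_smul, smul_smul, mul_comm]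

theorem sigma_iota_list (hσ : IsConjugation n σ) (hJ : IsLagerbergJ n J) (hι : IsIota n ι) :
    ∀ l : List (LForms n), (∀ ξ ∈ l, σ (ι ξ) = (-Complex.I) • ι (J ξ)) →
      σ (ι l.prod) = (-Complex.I) ^ l.length • ι (J l.prod)
  | [] => fun _ => by
      rw [List.prod_nil, hι.map_one, hσ.map_one, List.length_nil, pow_zero, hJ.map_one,
        hι.map_one, one_smul]
  | x :: l => fun h => by
      rw [List.prod_cons, hι.map_mul, hσ.map_mul, h x List.mem_cons_self,
        sigma_iota_list hσ hJ hι l (fun ξ hξ => h ξ (List.mem_cons_of_mem _ hξ)),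
        hJ.map_mul, hι.map_mul, List.length_cons, pow_succ,
        smul_mul_smul_comm, mul_comm (-Complex.I) ((-Complex.I) ^ l.length)]

theorem sigma_iota_pq (hσ : IsConjugation n σ) (hJ : IsLagerbergJ n J) (hι : IsIota n ι)
    (p : ℕ) : ∀ ω ∈ LFormsPQ n p p, σ (ι ω) = ((-1 : ℂ)) ^ p • ι (J ω) := by
  intro ω hω
  induction hω using Submodule.span_induction with
  | mem x hx =>
      obtain ⟨a, b, rfl⟩ := hx
      have hprod : lDecomp a * lDecomp'' b
          = ((List.ofFn fun j => lOne (a j)) ++ (List.ofFn fun j => lOne'' (b j))).prod := by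
        rw [List.prod_append, lDecomp, lDecomp'']
      have hmem : ∀ ξ ∈ (List.ofFn fun j => lOne (a j)) ++ (List.ofFn fun j => lOne'' (b j)),
          σ (ι ξ) = (-Complex.I) • ι (J ξ) := by
        intro ξ hξ
        rcases List.mem_append.1 hξ with hm | hm
        · obtain ⟨j, rfl⟩ := List.mem_ofFn.1 hm
          exact sigma_iota_lOne hσ hJ hι (a j)
        · obtain ⟨j, rfl⟩ := List.mem_ofFn.1 hm
          exact sigma_iota_lOne'' hσ hJ hι (b j)
      rw [hprod, sigma_iota_list hσ hJ hι _ hmem]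
      congr 1
      rw [List.length_append, List.length_ofFn, List.length_ofFn, ← two_mul, pow_mul,
        neg_sq, Complex.I_sq]
  | zero =>
      rw [hι.map_zero, hσ.map_zero, hJ.map_zero, hι.map_zero, smul_zero]
  | add x y _ _ hx hy =>
      rw [hι.map_add, hσ.map_add, hJ.map_add, hι.map_add, smul_add, hx, hy]
  | smul r x _ hx =>
      rw [hι.map_smul, hσ.map_smul, Complex.conj_ofReal, hJ.map_smul, hι.map_smul, hx,
        smul_comm]

end Abstract2

/-- Proposition 2.13. Properties of the embedding
`ι : Λ^{·,·}V' → Λ^{·,·}V*`: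
(1) its image is exactly the set of `F`-invariant elements of `Λ^{·,·}V*`;
(2) for every degree-one element `ξ ∈ V' ⊕ V''`, one has `ι(J(ξ)) = i · σ(ι(ξ))`;
(3) a Lagerberg `(p,p)`-form `ω` is symmetric if and only if `ι(ω)` is real;
(4) `ι(τ_n) = ω_n`. -/
theorem iota_properties (n : ℕ)
    (σ : CForms n → CForms n) (hσ : IsConjugation n σ)
    (F : CForms n → CForms n) (hF : IsFInvolution n F)
    (J : LForms n → LForms n) (hJ : IsLagerbergJ n J)
    (ι : LForms n → CForms n) (hι : IsIota n ι) :
    Set.range ι = { x : CForms n | F x = x } ∧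
    (∀ ξ ∈ Submodule.span ℝ (Set.range (ldu (n := n)) ∪ Set.range (lddu (n := n))),
      ι (J ξ) = Complex.I • σ (ι ξ)) ∧
    (∀ (p : ℕ), ∀ ω ∈ LFormsPQ n p p,
      (J ω = ((-1 : ℝ)) ^ p • ω ↔ σ (ι ω) = ι ω)) ∧
    ι (lTauTop n) = cOmegaTop n := by
  refine ⟨?_, ?_, ?_, ?_⟩
  · -- (1) range of `ι` = fixed points of `F`
    ext x
    simp only [Set.mem_range, Set.mem_setOf_eq]
    constructor
    · rintro ⟨y, rfl⟩
      exact hF.fix_iota hι y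
    · intro hx
      obtain ⟨a, b, hab⟩ := hι.exists_decomp x
      have h1 : F x = ι a + (-Complex.I) • ι b := by
        rw [hab, hF.map_add, hF.map_smul, Complex.conj_I, hF.fix_iota hι, hF.fix_iota hι]
      have h2 : ι a + (-Complex.I) • ι b = ι a + Complex.I • ι b := by
        rw [← h1, hx, hab]
      have h3 := add_left_cancel h2
      have h4 : ι b = -ι b := by
        have h5 := congrArg (fun z => Complex.I • z) h3
        rw [smul_smul, smul_smul, mul_neg, Complex.I_mul_I, neg_neg, one_smul,
          neg_one_smul] at h5
        exact h5
      have h6 : (2 : ℂ) • ι b = 0 := by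
        rw [two_smul]
        nth_rewrite 2 [h4]
        exact add_neg_cancel (ι b)
      have h7 : ι b = 0 := by
        calc ι b = ((2 : ℂ)⁻¹ * 2) • ι b := by norm_num
          _ = (2 : ℂ)⁻¹ • ((2 : ℂ) • ι b) := by rw [mul_smul]
          _ = 0 := by rw [h6, smul_zero]
      exact ⟨a, by rw [hab, h7, smul_zero, add_zero]⟩
  · -- (2)
    intro ξ hξ
    induction hξ using Submodule.span_induction with
    | mem x hx =>
        rcases hx with hx | hx
        · obtain ⟨i, rfl⟩ := hx
          rw [hJ.map_du, hι.map_ddu, hι.map_du, hσ.map_du]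
        · obtain ⟨i, rfl⟩ := hx
          rw [hJ.map_ddu, hι.map_du, hι.map_ddu, hσ.map_smul, Complex.conj_I, hσ.map_dub,
            smul_smul, mul_neg, Complex.I_mul_I, neg_neg, one_smul]
    | zero => rw [hJ.map_zero, hι.map_zero, hσ.map_zero, smul_zero]
    | add x y _ _ hx hy =>
        rw [hJ.map_add, hι.map_add, hx, hy, hι.map_add, hσ.map_add, smul_add]
    | smul r x _ hx =>
        rw [hJ.map_smul, hι.map_smul, hx, hι.map_smul, hσ.map_smul, Complex.conj_ofReal,
          smul_comm]
  · -- (3)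
    intro p ω hω
    have key := sigma_iota_pq hσ hJ hι p ω hω
    have hcoe : ((((-1 : ℝ)) ^ p : ℝ) : ℂ) = ((-1 : ℂ)) ^ p := by push_cast; ring
    constructor
    · intro hJω
      rw [key, hJω, hι.map_smul, hcoe, smul_smul, ← mul_pow]
      norm_num
    · intro hs
      have h2 : ι (J ω) = ι (((-1 : ℝ)) ^ p • ω) := by
        rw [hι.map_smul, hcoe]
        rw [hs] at key
        calc ι (J ω) = (((-1 : ℂ)) ^ p * ((-1 : ℂ)) ^ p) • ι (J ω) := by
              rw [← mul_pow]
              norm_num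
          _ = ((-1 : ℂ)) ^ p • (((-1 : ℂ)) ^ p • ι (J ω)) := by rw [mul_smul]
          _ = ((-1 : ℂ)) ^ p • ι ω := by rw [← key]
      exact hι.injective h2
  · -- (4)
    rw [lTauTop, map_listProd_of hι.map_one hι.map_mul, List.map_ofFn, cOmegaTop]
    have hfn : (ι ∘ fun i : Fin n => ldu i * lddu i)
        = fun i : Fin n => cdu i * Complex.I • cdub i := by
      funext i
      simp only [Function.comp_apply]
      rw [hι.map_mul, hι.map_du, hι.map_ddu]
    rw [hfn]
end
end

section
/- The involution F of Λ^{·,·}V* maps strongly positive (p,p)-forms to strongly positive forms, positive forms to positive forms, and weakly positive forms to weakly positive forms. -/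
/- Setup: `V = ℝⁿ` with its standard basis, `V_ℂ` its complexification,
`V* = Hom_ℝ(V,ℂ)` and `V̄*` the antilinear maps `V_ℂ → ℂ`.  The bigraded exterior algebra
`Λ^{·,·}V* = Λ_ℂ(V* ⊕ V̄*)` is modeled as the exterior algebra over `ℂ` of the free
complex module on the `2n` generators `du_1,…,du_n` (first summand) and
`dū_1,…,dū_n` (second summand). -/

noncomputable section
open ExteriorAlgebra

section Aux

variable {n : ℕ} {F : CForms n → CForms n}

lemma F_sum (hF : IsFInvolution n F) {ι : Type*} (s : Finset ι) (f : ι → CForms n) :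
    F (∑ i ∈ s, f i) = ∑ i ∈ s, F (f i) :=
  map_sum (AddMonoidHom.mk' F hF.map_add) f s

lemma F_listProd (hF : IsFInvolution n F) : ∀ l : List (CForms n), F l.prod = (l.map F).prod
  | [] => by simpa using hF.map_one
  | a :: l => by
      rw [List.prod_cons, hF.map_mul, List.map_cons, List.prod_cons, F_listProd hF l]

lemma F_cOne (hF : IsFInvolution n F) (c : Fin n → ℂ) :
    F (cOne c) = cOne (fun i => (starRingEnd ℂ) (c i)) := by
  unfold cOne
  rw [F_sum hF]
  exact Finset.sum_congr rfl fun i _ => by rw [hF.map_smul, hF.map_du]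

lemma F_cConjOne (hF : IsFInvolution n F) (c : Fin n → ℂ) :
    F (cConjOne c) = - cConjOne (fun i => (starRingEnd ℂ) (c i)) := by
  unfold cConjOne
  rw [F_sum hF, ← Finset.sum_neg_distrib]
  exact Finset.sum_congr rfl fun i _ => by
    rw [hF.map_smul, hF.map_dub, smul_neg]

lemma F_cOneBar (hF : IsFInvolution n F) (c : Fin n → ℂ) :
    F (cOneBar c) = - cOneBar (fun i => (starRingEnd ℂ) (c i)) := by
  unfold cOneBar
  rw [F_sum hF, ← Finset.sum_neg_distrib]
  exact Finset.sum_congr rfl fun i _ => by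
    rw [hF.map_smul, hF.map_dub, smul_neg]

lemma F_strongFactor (hF : IsFInvolution n F) (c : Fin n → ℂ) :
    F (cOne c * (Complex.I • cConjOne c)) =
      cOne (fun i => (starRingEnd ℂ) (c i)) *
        (Complex.I • cConjOne (fun i => (starRingEnd ℂ) (c i))) := by
  rw [hF.map_mul, F_cOne hF, hF.map_smul, F_cConjOne hF]
  simp [Complex.conj_I, smul_neg, neg_smul]

lemma F_strongGenExpr (hF : IsFInvolution n F) {p : ℕ} (c : Fin p → Fin n → ℂ) :
    F ((List.ofFn fun j => cOne (c j) * (Complex.I • cConjOne (c j))).prod) =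
      (List.ofFn fun j => cOne (fun i => (starRingEnd ℂ) (c j i)) *
        (Complex.I • cConjOne (fun i => (starRingEnd ℂ) (c j i)))).prod := by
  rw [F_listProd hF, List.map_ofFn]
  exact congrArg List.prod (congrArg List.ofFn (funext fun j => F_strongFactor hF (c j)))

lemma F_strongGen (hF : IsFInvolution n F) {p : ℕ} {x : CForms n}
    (hx : x ∈ cStrongGen n p) : F x ∈ cStrongGen n p ∧ F (F x) = x := by
  obtain ⟨c, rfl⟩ := hx
  constructor
  · exact ⟨_, F_strongGenExpr hF c⟩
  · rw [F_strongGenExpr hF c, F_strongGenExpr hF]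
    simp

lemma F_strongPos (hF : IsFInvolution n F) {p : ℕ} {x : CForms n}
    (hx : x ∈ cStrongPos n p) : F x ∈ cStrongPos n p ∧ F (F x) = x := by
  obtain ⟨m, t, y, ht, hy, rfl⟩ := hx
  have key : ∀ y' : Fin m → CForms n,
      F (∑ k, ((t k : ℂ)) • y' k) = ∑ k, ((t k : ℂ)) • F (y' k) := fun y' => by
    rw [F_sum hF]
    exact Finset.sum_congr rfl fun k _ => by
      rw [hF.map_smul, Complex.conj_ofReal]
  constructor
  · exact ⟨m, t, fun k => F (y k), ht, fun k => (F_strongGen hF (hy k)).1, key y⟩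
  · rw [key y, key fun k => F (y k)]
    exact Finset.sum_congr rfl fun k _ => by rw [(F_strongGen hF (hy k)).2]

lemma F_cDecomp (hF : IsFInvolution n F) {p : ℕ} (c : Fin p → Fin n → ℂ) :
    F (cDecomp c) = cDecomp (fun j i => (starRingEnd ℂ) (c j i)) := by
  unfold cDecomp
  rw [F_listProd hF, List.map_ofFn]
  exact congrArg List.prod (congrArg List.ofFn (funext fun j => F_cOne hF (c j)))

lemma negListProd : ∀ (p : ℕ) (g : Fin p → CForms n),
    (List.ofFn fun j => -(g j)).prod = ((-1 : ℂ) ^ p) • (List.ofFn g).prod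
  | 0, g => by simp
  | p + 1, g => by
      rw [List.ofFn_succ, List.ofFn_succ, List.prod_cons, List.prod_cons,
        negListProd p fun j => g j.succ]
      rw [neg_mul, mul_smul_comm, pow_succ, mul_smul, neg_one_smul, smul_neg]

lemma F_cDecompBar (hF : IsFInvolution n F) {p : ℕ} (c : Fin p → Fin n → ℂ) :
    F (cDecompBar c) = ((-1 : ℂ) ^ p) • cDecompBar (fun j i => (starRingEnd ℂ) (c j i)) := by
  unfold cDecompBar
  rw [F_listProd hF, List.map_ofFn]
  have : (List.ofFn (F ∘ fun j => cConjOne (c j))) =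
      List.ofFn fun j => -(cConjOne (fun i => (starRingEnd ℂ) (c j i))) :=
    congrArg List.ofFn (funext fun j => F_cConjOne hF (c j))
  rw [this, negListProd]

lemma neg_one_pow_sq_mul (p : ℕ) : ((-1 : ℂ) ^ (p ^ 2)) * ((-1 : ℂ) ^ p) = 1 := by
  rw [← pow_add]
  refine Even.neg_one_pow ?_
  have : p ^ 2 + p = p * (p + 1) := by ring
  rw [this]
  exact Nat.even_mul_succ_self p

lemma F_omegaTop (hF : IsFInvolution n F) : F (cOmegaTop n) = cOmegaTop n := by
  unfold cOmegaTop
  rw [F_listProd hF, List.map_ofFn]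
  refine congrArg List.prod (congrArg List.ofFn (funext fun i => ?_))
  show F (cdu i * (Complex.I • cdub i)) = _
  rw [hF.map_mul, hF.map_du, hF.map_smul, hF.map_dub]
  simp [Complex.conj_I, smul_neg, neg_smul]

end Aux

/-- Lemma 2.15. The involution `F` of `Λ^{·,·}V*` maps strongly positive
`(p,p)`-forms to strongly positive forms, positive forms to positive forms, and weakly
positive forms to weakly positive forms. -/
theorem F_preserves_positivity (n p : ℕ) (F : CForms n → CForms n)
    (hF : IsFInvolution n F) :
    (∀ x ∈ cStrongPos n p, F x ∈ cStrongPos n p) ∧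
    (∀ x ∈ cPos n p, F x ∈ cPos n p) ∧
    (∀ x ∈ cWeakPos n p, F x ∈ cWeakPos n p) := by
  refine ⟨fun x hx => (F_strongPos hF hx).1, ?_, ?_⟩
  · -- positive forms
    rintro x ⟨m, t, y, ht, hy, rfl⟩
    refine ⟨m, t, fun k => F (y k), ht, ?_, ?_⟩
    · intro k
      obtain ⟨m', c, hc⟩ := hy k
      refine ⟨m', fun l j i => (starRingEnd ℂ) (c l j i), ?_⟩
      show F (y k) = _
      rw [hc, hF.map_smul, hF.map_mul, F_sum hF, F_sum hF]
      have hA : ∑ l, F (cDecomp (c l)) = ∑ l, cDecomp (fun j i => (starRingEnd ℂ) (c l j i)) :=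
        Finset.sum_congr rfl fun l _ => F_cDecomp hF (c l)
      have hB : ∑ l, F (cDecompBar (c l)) =
          ((-1 : ℂ) ^ p) • ∑ l, cDecompBar (fun j i => (starRingEnd ℂ) (c l j i)) := by
        rw [Finset.smul_sum]
        exact Finset.sum_congr rfl fun l _ => F_cDecompBar hF (c l)
      rw [hA, hB, mul_smul_comm, smul_smul, map_pow, Complex.conj_I, neg_pow,
        mul_assoc, mul_comm ((Complex.I : ℂ) ^ (p ^ 2)), ← mul_assoc, neg_one_pow_sq_mul,
        one_mul]
    · rw [F_sum hF]
      exact Finset.sum_congr rfl fun k _ => by rw [hF.map_smul, Complex.conj_ofReal]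
  · -- weakly positive forms
    rintro x ⟨hxPQ, hxW⟩
    constructor
    · refine Submodule.span_induction ?_ ?_ ?_ ?_ hxPQ
      · rintro z ⟨a, b, rfl⟩
        rw [hF.map_mul, F_cDecomp hF, F_listProd hF, List.map_ofFn]
        have : (List.ofFn (F ∘ fun j => cOneBar (b j))) =
            List.ofFn fun j => -(cOneBar (fun i => (starRingEnd ℂ) (b j i))) :=
          congrArg List.ofFn (funext fun j => F_cOneBar hF (b j))
        rw [this, negListProd, mul_smul_comm]
        exact Submodule.smul_mem _ _ (Submodule.subset_span
          ⟨fun j i => (starRingEnd ℂ) (a j i), fun j i => (starRingEnd ℂ) (b j i), rfl⟩)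
      · have h0 : F (0 : CForms n) = 0 := by simpa using hF.map_smul 0 0
        rw [h0]; exact Submodule.zero_mem _
      · intro u v _ _ hu hv
        rw [hF.map_add]; exact Submodule.add_mem _ hu hv
      · intro c u _ hu
        rw [hF.map_smul]; exact Submodule.smul_mem _ _ hu
    · intro η hη
      obtain ⟨hFη, hFFη⟩ := F_strongPos hF hη
      obtain ⟨γ, hγ, hxη⟩ := hxW (F η) hFη
      refine ⟨γ, hγ, ?_⟩
      have := congrArg F hxη
      rw [hF.map_mul, hFFη, hF.map_smul, Complex.conj_ofReal, F_omegaTop hF] at this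
      exact this
end
end

section
/- A Lagerberg form ω ∈ Λ^{p,p}V' is a positive Lagerberg form if and only if ι(ω) ∈ Λ^{p,p}V* is a positive complex form. -/
/- Setup: `V = ℝⁿ` with its standard basis, `V_ℂ` its complexification,
`V* = Hom_ℝ(V,ℂ)` and `V̄*` the antilinear maps `V_ℂ → ℂ`.  The bigraded exterior algebra
`Λ^{·,·}V* = Λ_ℂ(V* ⊕ V̄*)` is modeled as the exterior algebra over `ℂ` of the free
complex module on the `2n` generators `du_1,…,du_n` (first summand) and
`dū_1,…,dū_n` (second summand). -/

noncomputable section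
open ExteriorAlgebra

namespace PosAux

open scoped TensorProduct
open Complex

variable {n p : ℕ}

lemma prod_smul_ofFn {A : Type*} [Ring A] [Algebra ℂ A] (c : ℂ) :
    ∀ (p : ℕ) (h : Fin p → A),
      (List.ofFn fun j => c • h j).prod = c ^ p • (List.ofFn h).prod
  | 0, h => by simp
  | (p+1), h => by
    rw [List.ofFn_succ, List.ofFn_succ, List.prod_cons, List.prod_cons,
      prod_smul_ofFn c p, smul_mul_assoc, mul_smul_comm, smul_smul, pow_succ, mul_comm c]

lemma expand_prod {A : Type*} [Ring A] [Algebra ℂ A] (c : ℂ) :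
    ∀ (p : ℕ) (f g : Fin p → A),
      (List.ofFn fun j => f j + c • g j).prod
        = ∑ s : Fin p → Bool,
            c ^ (∑ j, cond (s j) 1 0) • (List.ofFn fun j => cond (s j) (g j) (f j)).prod
  | 0, f, g => by simp
  | (p+1), f, g => by
    rw [List.ofFn_succ, List.prod_cons,
      expand_prod c p (fun j => f j.succ) (fun j => g j.succ)]
    rw [← (Fin.consEquiv (fun _ : Fin (p+1) => Bool)).sum_comp]
    rw [Fintype.sum_prod_type]
    rw [Fintype.sum_bool]
    simp only [Fin.consEquiv_apply, Fin.sum_univ_succ, Fin.cons_zero, Fin.cons_succ,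
      List.ofFn_succ, List.prod_cons, cond_true, cond_false, pow_add, pow_one, pow_zero, one_mul]
    rw [add_mul, Finset.mul_sum, Finset.mul_sum]
    rw [add_comm]
    congr 1
    · exact Finset.sum_congr rfl fun s _ => by
        simp only [smul_mul_assoc, mul_smul_comm, smul_smul]
        rw [mul_comm c]
    · exact Finset.sum_congr rfl fun s _ => by rw [mul_smul_comm]

end PosAux
namespace PosAux

/-! ### Cone lemmas on the Lagerberg side -/

lemma lCone_zero {n : ℕ} {S : Set (LForms n)} : (0 : LForms n) ∈ lCone S :=
  ⟨0, Fin.elim0, Fin.elim0, fun k => k.elim0, fun k => k.elim0, by simp⟩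

lemma lCone_of_mem {n : ℕ} {S : Set (LForms n)} {y : LForms n} (hy : y ∈ S) : y ∈ lCone S :=
  ⟨1, fun _ => 1, fun _ => y, fun _ => zero_le_one, fun _ => hy, by simp⟩

lemma lCone_add {n : ℕ} {S : Set (LForms n)} {x y : LForms n}
    (hx : x ∈ lCone S) (hy : y ∈ lCone S) : x + y ∈ lCone S := by
  obtain ⟨m₁, t₁, y₁, ht₁, hy₁, rfl⟩ := hx
  obtain ⟨m₂, t₂, y₂, ht₂, hy₂, rfl⟩ := hy
  refine ⟨m₁ + m₂, Fin.addCases t₁ t₂, Fin.addCases y₁ y₂, ?_, ?_, ?_⟩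
  · intro k; induction k using Fin.addCases with
    | left k => simpa using ht₁ k
    | right k => simpa using ht₂ k
  · intro k; induction k using Fin.addCases with
    | left k => simpa using hy₁ k
    | right k => simpa using hy₂ k
  · rw [Fin.sum_univ_add]; simp

lemma lCone_smul {n : ℕ} {S : Set (LForms n)} {x : LForms n} {c : ℝ}
    (hc : 0 ≤ c) (hx : x ∈ lCone S) : c • x ∈ lCone S := by
  obtain ⟨m, t, y, ht, hy, rfl⟩ := hx
  exact ⟨m, fun k => c * t k, y, fun k => mul_nonneg hc (ht k), hy, by
    simp [Finset.smul_sum, smul_smul]⟩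

lemma lCone_sum {n m : ℕ} {S : Set (LForms n)} {x : Fin m → LForms n}
    (hx : ∀ k, x k ∈ lCone S) : (∑ k, x k) ∈ lCone S :=
  Finset.sum_induction x (· ∈ lCone S) (fun _ _ => lCone_add) lCone_zero (fun k _ => hx k)

/-! ### The base-change map Ψ : CForms n →ₐ[ℂ] ℂ ⊗[ℝ] LForms n -/

open scoped TensorProduct

abbrev AA (n : ℕ) : Type := ℂ ⊗[ℝ] LForms n

def gen {n : ℕ} (b : Fin n ⊕ Fin n) : LForms n := ExteriorAlgebra.ι ℝ (Pi.single b 1)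

def ccoef {n : ℕ} : Fin n ⊕ Fin n → ℂ := Sum.elim (fun _ => 1) (fun _ => -Complex.I)

def jmap (n : ℕ) : ((Fin n ⊕ Fin n) → ℂ) →ₗ[ℂ] AA n where
  toFun v := ∑ b, (ccoef b * v b) • ((1 : ℂ) ⊗ₜ[ℝ] gen b)
  map_add' v w := by simp [mul_add, add_smul, Finset.sum_add_distrib]
  map_smul' c v := by
    simp only [Pi.smul_apply, smul_eq_mul, RingHom.id_apply, Finset.smul_sum, smul_smul]
    exact Finset.sum_congr rfl fun b _ => by ring_nf

lemma eq_zero_of_self_eq_neg {M : Type*} [AddCommGroup M] [Module ℝ M] {x : M}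
    (h : x = -x) : x = 0 := by
  have h3 : (2:ℝ) • x = 0 := by rw [two_smul]; nth_rewrite 1 [h]; rw [neg_add_cancel]
  have : x = ((1/2 : ℝ) * 2) • x := by norm_num
  rw [this, mul_smul, h3, smul_zero]

lemma jmap_sq_zero {n : ℕ} (v : (Fin n ⊕ Fin n) → ℂ) : jmap n v * jmap n v = 0 := by
  have hanti : ∀ b d : Fin n ⊕ Fin n, ((1:ℂ) ⊗ₜ[ℝ] gen b) * ((1:ℂ) ⊗ₜ[ℝ] gen d)
      = - (((1:ℂ) ⊗ₜ[ℝ] gen d) * ((1:ℂ) ⊗ₜ[ℝ] gen b)) := by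
    intro b d
    rw [Algebra.TensorProduct.tmul_mul_tmul, Algebra.TensorProduct.tmul_mul_tmul, mul_one,
      gen, gen, eq_neg_of_add_eq_zero_left (ExteriorAlgebra.ι_add_mul_swap (R := ℝ)
        (Pi.single b 1) (Pi.single d 1)), TensorProduct.tmul_neg]
  simp only [jmap, LinearMap.coe_mk, AddHom.coe_mk]
  rw [Finset.sum_mul_sum]
  have key : ∀ b d : Fin n ⊕ Fin n,
      ((ccoef b * v b) • ((1:ℂ) ⊗ₜ[ℝ] gen b)) * ((ccoef d * v d) • ((1:ℂ) ⊗ₜ[ℝ] gen d))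
      = - (((ccoef d * v d) • ((1:ℂ) ⊗ₜ[ℝ] gen d)) * ((ccoef b * v b) • ((1:ℂ) ⊗ₜ[ℝ] gen b))) := by
    intro b d
    rw [smul_mul_smul_comm, smul_mul_smul_comm, hanti b d, smul_neg, mul_comm]
  have h2 : (∑ b, ∑ d, ((ccoef b * v b) • ((1:ℂ) ⊗ₜ[ℝ] gen b)) *
      ((ccoef d * v d) • ((1:ℂ) ⊗ₜ[ℝ] gen d)))
      = - ∑ b, ∑ d, ((ccoef b * v b) • ((1:ℂ) ⊗ₜ[ℝ] gen b)) *
      ((ccoef d * v d) • ((1:ℂ) ⊗ₜ[ℝ] gen d)) := by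
    conv_lhs => rw [Finset.sum_comm]
    rw [← Finset.sum_neg_distrib]
    exact Finset.sum_congr rfl fun d _ => by
      rw [← Finset.sum_neg_distrib]
      exact Finset.sum_congr rfl fun b _ => key b d
  exact eq_zero_of_self_eq_neg h2

def Psi (n : ℕ) : CForms n →ₐ[ℂ] AA n :=
  ExteriorAlgebra.lift ℂ ⟨jmap n, jmap_sq_zero⟩

lemma Psi_cdu {n : ℕ} (i : Fin n) : Psi n (cdu i) = (1:ℂ) ⊗ₜ[ℝ] ldu i := by
  rw [Psi, cdu, ExteriorAlgebra.lift_ι_apply]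
  simp only [jmap, LinearMap.coe_mk, AddHom.coe_mk]
  rw [Finset.sum_eq_single (Sum.inl i)]
  · simp only [ccoef, Sum.elim_inl, Pi.single_eq_same, mul_one, one_smul]; rfl
  · intro b _ hb; rw [Pi.single_eq_of_ne hb, mul_zero, zero_smul]
  · intro h; exact absurd (Finset.mem_univ _) h

lemma Psi_cdub {n : ℕ} (i : Fin n) :
    Psi n (cdub i) = (-Complex.I) • ((1:ℂ) ⊗ₜ[ℝ] lddu i) := by
  rw [Psi, cdub, ExteriorAlgebra.lift_ι_apply]
  simp only [jmap, LinearMap.coe_mk, AddHom.coe_mk]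
  rw [Finset.sum_eq_single (Sum.inr i)]
  · simp only [ccoef, Sum.elim_inr, Pi.single_eq_same, mul_one]; rfl
  · intro b _ hb; rw [Pi.single_eq_of_ne hb, mul_zero, zero_smul]
  · intro h; exact absurd (Finset.mem_univ _) h

/-! ### The real-part retraction -/

def rmap (n : ℕ) : AA n →ₗ[ℝ] LForms n :=
  TensorProduct.lift ((LinearMap.lsmul ℝ (LForms n)).comp Complex.reLm)

@[simp] lemma rmap_tmul {n : ℕ} (z : ℂ) (x : LForms n) :
    rmap n (z ⊗ₜ[ℝ] x) = z.re • x := rfl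

lemma smul_one_tmul {n : ℕ} (z : ℂ) (x : LForms n) :
    z • ((1:ℂ) ⊗ₜ[ℝ] x) = z ⊗ₜ[ℝ] x := by
  rw [TensorProduct.smul_tmul', smul_eq_mul, mul_one]

@[simp] lemma rmap_one_tmul {n : ℕ} (x : LForms n) : rmap n ((1:ℂ) ⊗ₜ[ℝ] x) = x := by
  simp

end PosAux
namespace PosAux

open scoped TensorProduct

section iota
variable {n : ℕ} {ι : LForms n → CForms n} (hι : IsIota n ι)
include hι

lemma iota_zero : ι 0 = 0 := by
  have := hι.map_smul 0 0; simpa using this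

lemma iota_sum {α : Type*} (s : Finset α) (f : α → LForms n) :
    ι (∑ k ∈ s, f k) = ∑ k ∈ s, ι (f k) := by
  classical
  induction s using Finset.cons_induction with
  | empty => simpa using iota_zero hι
  | cons a s ha ih => rw [Finset.sum_cons, Finset.sum_cons, hι.map_add, ih]

lemma iota_listProd (L : List (LForms n)) : ι L.prod = (L.map ι).prod := by
  induction L with
  | nil => simpa using hι.map_one
  | cons a L ih => rw [List.prod_cons, hι.map_mul, ih, List.map_cons, List.prod_cons]

lemma psi_iota (x : LForms n) :
    Psi n (ι x) = Algebra.TensorProduct.includeRight (R := ℝ) (A := ℂ) x := by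
  induction x using ExteriorAlgebra.induction with
  | algebraMap r =>
      rw [Algebra.algebraMap_eq_smul_one, hι.map_smul, hι.map_one, map_smul,
        map_one, map_smul, map_one, ← Complex.coe_algebraMap, algebraMap_smul]
  | ι v =>
      have hv : (ExteriorAlgebra.ι ℝ) v = ∑ b, v b • gen b := by
        conv_lhs => rw [← Finset.univ_sum_single v]
        rw [map_sum]
        exact Finset.sum_congr rfl fun b _ => by
          rw [gen, ← map_smul]
          congr 1
          rw [← Pi.single_smul, smul_eq_mul, mul_one]
      rw [hv, iota_sum hι, map_sum, map_sum]
      refine Finset.sum_congr rfl fun b _ => ?_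
      rw [hι.map_smul, map_smul, map_smul, ← Complex.coe_algebraMap,
        algebraMap_smul]
      congr 1
      cases b with
      | inl i =>
          rw [show gen (Sum.inl i) = ldu i from rfl, hι.map_du, Psi_cdu,
            Algebra.TensorProduct.includeRight_apply]
      | inr i =>
          rw [show gen (Sum.inr i) = lddu i from rfl, hι.map_ddu, map_smul, Psi_cdub,
            smul_smul, mul_neg, Complex.I_mul_I, neg_neg, one_smul,
            Algebra.TensorProduct.includeRight_apply]
  | mul x y hx hy => rw [hι.map_mul, map_mul, map_mul, hx, hy]
  | add x y hx hy => rw [hι.map_add, map_add, map_add, hx, hy]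

end iota
end PosAux
namespace PosAux

open scoped TensorProduct

variable {n p : ℕ}

def lone1 {n : ℕ} (r : Fin n → ℝ) : AA n := (1:ℂ) ⊗ₜ[ℝ] lOne r
def lone2 {n : ℕ} (r : Fin n → ℝ) : AA n := (1:ℂ) ⊗ₜ[ℝ] lOne'' r

lemma tmul_lOne (r : Fin n → ℝ) :
    lone1 r = ∑ i, ((r i : ℝ) : ℂ) • ((1:ℂ) ⊗ₜ[ℝ] ldu i) := by
  rw [lone1, lOne, TensorProduct.tmul_sum]
  exact Finset.sum_congr rfl fun i _ => by
    rw [TensorProduct.tmul_smul, ← Complex.coe_algebraMap, algebraMap_smul]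

lemma tmul_lOne'' (r : Fin n → ℝ) :
    lone2 r = ∑ i, ((r i : ℝ) : ℂ) • ((1:ℂ) ⊗ₜ[ℝ] lddu i) := by
  rw [lone2, lOne'', TensorProduct.tmul_sum]
  exact Finset.sum_congr rfl fun i _ => by
    rw [TensorProduct.tmul_smul, ← Complex.coe_algebraMap, algebraMap_smul]

lemma Psi_cOne (c : Fin n → ℂ) :
    Psi n (cOne c) = ∑ i, c i • ((1:ℂ) ⊗ₜ[ℝ] ldu i) := by
  rw [cOne, map_sum]
  exact Finset.sum_congr rfl fun i _ => by rw [map_smul, Psi_cdu]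

lemma Psi_cOne_split (c : Fin n → ℂ) :
    Psi n (cOne c) = lone1 (fun i => (c i).re) + Complex.I • lone1 (fun i => (c i).im) := by
  rw [Psi_cOne, tmul_lOne, tmul_lOne, Finset.smul_sum, ← Finset.sum_add_distrib]
  exact Finset.sum_congr rfl fun i _ => by
    rw [smul_smul, ← add_smul]
    congr 1
    rw [mul_comm]
    exact (Complex.re_add_im (c i)).symm

lemma Psi_cConjOne_split (c : Fin n → ℂ) :
    Psi n (cConjOne c) = (-Complex.I) •
      (lone2 (fun i => (c i).re) + (-Complex.I) • lone2 (fun i => (c i).im)) := by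
  rw [cConjOne, map_sum, smul_add, tmul_lOne'', tmul_lOne'', smul_smul,
    Finset.smul_sum, Finset.smul_sum, ← Finset.sum_add_distrib]
  refine Finset.sum_congr rfl fun i _ => ?_
  rw [map_smul, Psi_cdub, smul_smul, smul_smul, smul_smul, ← add_smul]
  congr 1
  apply Complex.ext <;> simp

/-- The weight of a sign pattern. -/
def wt {p : ℕ} (s : Fin p → Bool) : ℕ := ∑ j, cond (s j) 1 0

/-- The real/imaginary row picks. -/
def pick {n p : ℕ} (a : Fin p → Fin n → ℂ) (s : Fin p → Bool) : Fin p → Fin n → ℝ :=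
  fun j i => cond (s j) ((a j i).im) ((a j i).re)

lemma Psi_cDecomp (a : Fin p → Fin n → ℂ) :
    Psi n (cDecomp a) = ∑ s : Fin p → Bool,
      Complex.I ^ wt s • ((1:ℂ) ⊗ₜ[ℝ] lDecomp (pick a s)) := by
  rw [cDecomp, map_list_prod, List.map_ofFn]
  have h1 : (List.ofFn fun j => Psi n (cOne (a j))).prod
      = (List.ofFn fun j => lone1 (fun i => ((a j) i).re)
          + Complex.I • lone1 (fun i => ((a j) i).im)).prod := by
    rw [show (fun j => Psi n (cOne (a j)))
      = fun j => lone1 (fun i => ((a j) i).re) + Complex.I • lone1 (fun i => ((a j) i).im)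
      from funext fun j => Psi_cOne_split (a j)]
  rw [show (List.ofFn (⇑(Psi n) ∘ fun j => cOne (a j))).prod
      = (List.ofFn fun j => Psi n (cOne (a j))).prod from rfl, h1,
    expand_prod Complex.I p (fun j => lone1 fun i => ((a j) i).re)
      (fun j => lone1 fun i => ((a j) i).im)]
  refine Finset.sum_congr rfl fun s _ => ?_
  rw [wt]
  congr 1
  have h2 : ∀ j, (cond (s j) (lone1 fun i => ((a j) i).im) (lone1 fun i => ((a j) i).re))
      = lone1 (pick a s j) := by
    intro j; unfold pick; cases hsj : s j <;> simp
  calc (List.ofFn fun j => cond (s j) (lone1 fun i => ((a j) i).im)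
          (lone1 fun i => ((a j) i).re)).prod
      = (List.ofFn fun j => lone1 (pick a s j)).prod := by
        rw [show (fun j => cond (s j) (lone1 fun i => ((a j) i).im) (lone1 fun i => ((a j) i).re))
          = fun j => lone1 (pick a s j) from funext h2]
    _ = (1:ℂ) ⊗ₜ[ℝ] lDecomp (pick a s) := by
        rw [show (fun j => lone1 (pick a s j))
            = (Algebra.TensorProduct.includeRight (R := ℝ) (A := ℂ)) ∘ (fun j => lOne (pick a s j))
            from rfl, ← List.map_ofFn, ← map_list_prod]
        rw [Algebra.TensorProduct.includeRight_apply, lDecomp]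

lemma Psi_cDecompBar (a : Fin p → Fin n → ℂ) :
    Psi n (cDecompBar a) = (-Complex.I) ^ p • ∑ s : Fin p → Bool,
      (-Complex.I) ^ wt s • ((1:ℂ) ⊗ₜ[ℝ] lDecomp'' (pick a s)) := by
  rw [cDecompBar, map_list_prod, List.map_ofFn]
  have h1 : (List.ofFn (Psi n ∘ fun j => cConjOne (a j))).prod
      = (List.ofFn fun j => (-Complex.I) • (lone2 (fun i => ((a j) i).re)
          + (-Complex.I) • lone2 (fun i => ((a j) i).im))).prod := by
    rw [show (⇑(Psi n) ∘ fun j => cConjOne (a j))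
      = fun j => (-Complex.I) • (lone2 (fun i => ((a j) i).re)
          + (-Complex.I) • lone2 (fun i => ((a j) i).im))
      from funext fun j => Psi_cConjOne_split (a j)]
  rw [h1, prod_smul_ofFn (-Complex.I) p (fun j => lone2 (fun i => ((a j) i).re)
      + (-Complex.I) • lone2 (fun i => ((a j) i).im)),
    expand_prod (-Complex.I) p (fun j => lone2 fun i => ((a j) i).re)
      (fun j => lone2 fun i => ((a j) i).im)]
  congr 1
  refine Finset.sum_congr rfl fun s _ => ?_
  rw [wt]
  congr 1
  have h2 : ∀ j, (cond (s j) (lone2 fun i => ((a j) i).im) (lone2 fun i => ((a j) i).re))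
      = lone2 (pick a s j) := by
    intro j; unfold pick; cases hsj : s j <;> simp
  calc (List.ofFn fun j => cond (s j) (lone2 fun i => ((a j) i).im)
          (lone2 fun i => ((a j) i).re)).prod
      = (List.ofFn fun j => lone2 (pick a s j)).prod := by
        rw [show (fun j => cond (s j) (lone2 fun i => ((a j) i).im) (lone2 fun i => ((a j) i).re))
          = fun j => lone2 (pick a s j) from funext h2]
    _ = (1:ℂ) ⊗ₜ[ℝ] lDecomp'' (pick a s) := by
        rw [show (fun j => lone2 (pick a s j))
            = (Algebra.TensorProduct.includeRight (R := ℝ) (A := ℂ)) ∘ (fun j => lOne'' (pick a s j))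
            from rfl, ← List.map_ofFn, ← map_list_prod]
        rw [Algebra.TensorProduct.includeRight_apply, lDecomp'']

end PosAux
namespace PosAux

variable {n p : ℕ}

lemma nat_fact1 (p : ℕ) : p * (p - 1) / 2 * 2 = p * (p - 1) := by
  refine Nat.div_mul_cancel (Even.two_dvd ?_)
  cases p with
  | zero => simp
  | succ k => simpa [Nat.succ_sub_one, mul_comm] using Nat.even_mul_succ_self k

lemma nat_fact2 (p : ℕ) : p ^ 2 = p * (p - 1) + p := by
  cases p with
  | zero => simp
  | succ k => simp [Nat.succ_sub_one, pow_two]; ring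

lemma nat_fact3 (p : ℕ) : p ^ 2 + p = 2 * (p * (p - 1) / 2 + p) := by
  have h1 := nat_fact1 p
  have h2 := nat_fact2 p
  omega

lemma nat_fact4 (p : ℕ) : p ^ 2 = 2 * (p * (p - 1) / 2) + p := by
  have h1 := nat_fact1 p
  have h2 := nat_fact2 p
  omega

lemma sign1 (p : ℕ) : Complex.I ^ (p ^ 2) * (-Complex.I) ^ p
    = (((-1 : ℝ) ^ (p * (p - 1) / 2) : ℝ) : ℂ) := by
  rw [neg_pow, show Complex.I ^ p ^ 2 * ((-1:ℂ) ^ p * Complex.I ^ p)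
      = (-1:ℂ) ^ p * Complex.I ^ (p ^ 2 + p) by rw [pow_add]; ring]
  rw [nat_fact3, pow_mul, Complex.I_sq, pow_add]
  have hp2 : ((-1:ℂ) ^ p) * ((-1:ℂ) ^ p) = 1 := by
    rw [← pow_add, ← two_mul, pow_mul, neg_one_sq, one_pow]
  push_cast
  calc (-1:ℂ) ^ p * ((-1:ℂ) ^ (p * (p - 1) / 2) * (-1:ℂ) ^ p)
      = ((-1:ℂ) ^ p * (-1:ℂ) ^ p) * (-1:ℂ) ^ (p * (p - 1) / 2) := by ring
    _ = (-1:ℂ) ^ (p * (p - 1) / 2) := by rw [hp2, one_mul]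

lemma sign2 (p : ℕ) : (((-1 : ℝ) ^ (p * (p - 1) / 2) : ℝ) : ℂ) * Complex.I ^ p
    = Complex.I ^ (p ^ 2) := by
  rw [nat_fact4, pow_add, pow_mul, Complex.I_sq]
  push_cast
  ring

/-- Absorption of coefficients: Fin-indexed version. -/
lemma absorb_fin {n p M : ℕ} (c : Fin M → ℝ) (b : Fin M → Fin p → Fin n → ℝ) :
    ((-1:ℝ)) ^ (p * (p - 1) / 2) •
      ((∑ l, c l • lDecomp (b l)) * (∑ l, c l • lDecomp'' (b l))) ∈ lPos n p := by
  cases p with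
  | zero =>
      have h1 : ∀ l : Fin M, lDecomp (b l) = (1 : LForms n) := by
        intro l; rw [lDecomp, List.ofFn_zero, List.prod_nil]
      have h2 : ∀ l : Fin M, lDecomp'' (b l) = (1 : LForms n) := by
        intro l; rw [lDecomp'', List.ofFn_zero, List.prod_nil]
      have hgen : (1 : LForms n) ∈ lPosGen n 0 := by
        refine ⟨1, fun _ => (fun j => j.elim0), ?_⟩
        simp [lDecomp, lDecomp'']
      have key : ((-1:ℝ)) ^ (0 * (0 - 1) / 2) •
          ((∑ l, c l • lDecomp (b l)) * (∑ l, c l • lDecomp'' (b l)))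
          = ((∑ l, c l) * (∑ l, c l)) • (1 : LForms n) := by
        simp only [h1, h2]
        rw [← Finset.sum_smul, smul_mul_smul_comm, mul_one]
        norm_num
      rw [key]
      exact lCone_smul (mul_self_nonneg _) (lCone_of_mem hgen)
  | succ q =>
      have h1 : ∀ l, lDecomp (Function.update (b l) 0 (c l • b l 0)) = c l • lDecomp (b l) := by
        intro l
        rw [lDecomp, lDecomp, List.ofFn_succ, List.ofFn_succ, List.prod_cons, List.prod_cons]
        have e1 : lOne (Function.update (b l) 0 (c l • b l 0) 0) = c l • lOne (b l 0) := by
          rw [Function.update_self, lOne, lOne, Finset.smul_sum]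
          exact Finset.sum_congr rfl fun i _ => by
            rw [Pi.smul_apply, smul_eq_mul, smul_smul]
        have e2 : (List.ofFn fun j : Fin q => lOne (Function.update (b l) 0 (c l • b l 0) j.succ))
            = List.ofFn fun j : Fin q => lOne (b l j.succ) :=
          congrArg List.ofFn (funext fun j => by
            rw [Function.update_of_ne (Fin.succ_ne_zero j)])
        rw [e1, e2, smul_mul_assoc]
      have h2 : ∀ l, lDecomp'' (Function.update (b l) 0 (c l • b l 0))
          = c l • lDecomp'' (b l) := by
        intro l
        rw [lDecomp'', lDecomp'', List.ofFn_succ, List.ofFn_succ, List.prod_cons, List.prod_cons]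
        have e1 : lOne'' (Function.update (b l) 0 (c l • b l 0) 0) = c l • lOne'' (b l 0) := by
          rw [Function.update_self, lOne'', lOne'', Finset.smul_sum]
          exact Finset.sum_congr rfl fun i _ => by
            rw [Pi.smul_apply, smul_eq_mul, smul_smul]
        have e2 : (List.ofFn fun j : Fin q => lOne'' (Function.update (b l) 0 (c l • b l 0) j.succ))
            = List.ofFn fun j : Fin q => lOne'' (b l j.succ) :=
          congrArg List.ofFn (funext fun j => by
            rw [Function.update_of_ne (Fin.succ_ne_zero j)])
        rw [e1, e2, smul_mul_assoc]
      refine lCone_of_mem ⟨M, fun l => Function.update (b l) 0 (c l • b l 0), ?_⟩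
      congr 1
      congr 1
      · exact Finset.sum_congr rfl fun l _ => (h1 l).symm
      · exact Finset.sum_congr rfl fun l _ => (h2 l).symm

/-- Absorption of coefficients: arbitrary finite index version. -/
lemma absorb {T : Type*} [Fintype T] (c : T → ℝ) (b : T → Fin p → Fin n → ℝ) :
    ((-1:ℝ)) ^ (p * (p - 1) / 2) •
      ((∑ l, c l • lDecomp (b l)) * (∑ l, c l • lDecomp'' (b l))) ∈ lPos n p := by
  classical
  have e := (Fintype.equivFin T).symm
  have h1 : (∑ l, c l • lDecomp (b l))
      = ∑ k : Fin (Fintype.card T), c (e k) • lDecomp (b (e k)) :=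
    (Equiv.sum_comp e fun l => c l • lDecomp (b l)).symm
  have h2 : (∑ l, c l • lDecomp'' (b l))
      = ∑ k : Fin (Fintype.card T), c (e k) • lDecomp'' (b (e k)) :=
    (Equiv.sum_comp e fun l => c l • lDecomp'' (b l)).symm
  rw [h1, h2]
  exact absorb_fin (fun k => c (e k)) (fun k => b (e k))

end PosAux
namespace PosAux

open scoped TensorProduct

lemma rmap_Psi_posGen {n p : ℕ} {y : CForms n} (hy : y ∈ cPosGen n p) :
    rmap n (Psi n y) ∈ lPos n p := by
  obtain ⟨m, a, rfl⟩ := hy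
  have hA : Psi n (∑ l, cDecomp (a l))
      = ∑ t : Fin m × (Fin p → Bool),
          Complex.I ^ wt t.2 • ((1:ℂ) ⊗ₜ[ℝ] lDecomp (pick (a t.1) t.2)) := by
    rw [map_sum, Fintype.sum_prod_type]
    exact Finset.sum_congr rfl fun l _ => Psi_cDecomp (a l)
  have hB : Psi n (∑ l, cDecompBar (a l))
      = (-Complex.I) ^ p • ∑ t : Fin m × (Fin p → Bool),
          (-Complex.I) ^ wt t.2 • ((1:ℂ) ⊗ₜ[ℝ] lDecomp'' (pick (a t.1) t.2)) := by
    rw [map_sum,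
      show (∑ l, Psi n (cDecompBar (a l))) = ∑ l, (-Complex.I) ^ p •
        ∑ s : Fin p → Bool, (-Complex.I) ^ wt s • ((1:ℂ) ⊗ₜ[ℝ] lDecomp'' (pick (a l) s))
        from Finset.sum_congr rfl fun l _ => Psi_cDecompBar (a l),
      ← Finset.smul_sum, Fintype.sum_prod_type]
  rw [map_smul, map_mul, hA, hB, mul_smul_comm, smul_smul, sign1 p,
    ← Complex.coe_algebraMap, algebraMap_smul, LinearMap.map_smul]
  have hSAB : rmap n ((∑ t : Fin m × (Fin p → Bool),
        Complex.I ^ wt t.2 • ((1:ℂ) ⊗ₜ[ℝ] lDecomp (pick (a t.1) t.2))) *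
      (∑ t : Fin m × (Fin p → Bool),
        (-Complex.I) ^ wt t.2 • ((1:ℂ) ⊗ₜ[ℝ] lDecomp'' (pick (a t.1) t.2))))
      = (∑ t : Fin m × (Fin p → Bool),
            (Complex.I ^ wt t.2).re • lDecomp (pick (a t.1) t.2)) *
          (∑ t : Fin m × (Fin p → Bool),
            (Complex.I ^ wt t.2).re • lDecomp'' (pick (a t.1) t.2))
        + (∑ t : Fin m × (Fin p → Bool),
            (Complex.I ^ wt t.2).im • lDecomp (pick (a t.1) t.2)) *
          (∑ t : Fin m × (Fin p → Bool),
            (Complex.I ^ wt t.2).im • lDecomp'' (pick (a t.1) t.2)) := by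
    rw [Finset.sum_mul_sum, Finset.sum_mul_sum, Finset.sum_mul_sum, map_sum,
      ← Finset.sum_add_distrib]
    refine Finset.sum_congr rfl fun t _ => ?_
    rw [map_sum, ← Finset.sum_add_distrib]
    refine Finset.sum_congr rfl fun t' _ => ?_
    rw [smul_mul_smul_comm, Algebra.TensorProduct.tmul_mul_tmul, one_mul, smul_one_tmul,
      rmap_tmul, smul_mul_smul_comm, smul_mul_smul_comm, ← add_smul]
    congr 1
    rw [show ((-Complex.I) ^ wt t'.2) = (starRingEnd ℂ) (Complex.I ^ wt t'.2) by
      rw [map_pow, Complex.conj_I]]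
    rw [Complex.mul_re, Complex.conj_re, Complex.conj_im]
    ring
  rw [hSAB, smul_add]
  exact lCone_add (absorb _ _) (absorb _ _)

section iota2
variable {n p : ℕ} {ι : LForms n → CForms n} (hι : IsIota n ι)
include hι

lemma iota_lOne (v : Fin n → ℝ) : ι (lOne v) = cOne (fun i => ((v i : ℝ) : ℂ)) := by
  rw [lOne, iota_sum hι, cOne]
  exact Finset.sum_congr rfl fun i _ => by rw [hι.map_smul, hι.map_du]

lemma iota_lOne'' (v : Fin n → ℝ) :
    ι (lOne'' v) = Complex.I • cConjOne (fun i => ((v i : ℝ) : ℂ)) := by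
  rw [lOne'', iota_sum hι, cConjOne, Finset.smul_sum]
  refine Finset.sum_congr rfl fun i _ => ?_
  rw [hι.map_smul, hι.map_ddu, Complex.conj_ofReal, smul_smul, smul_smul, mul_comm]

lemma iota_lDecomp (c : Fin p → Fin n → ℝ) :
    ι (lDecomp c) = cDecomp (fun j i => ((c j i : ℝ) : ℂ)) := by
  rw [lDecomp, iota_listProd hι, List.map_ofFn, cDecomp]
  exact congrArg List.prod (congrArg List.ofFn (funext fun j => iota_lOne hι (c j)))

lemma iota_lDecomp'' (c : Fin p → Fin n → ℝ) :
    ι (lDecomp'' c) = Complex.I ^ p • cDecompBar (fun j i => ((c j i : ℝ) : ℂ)) := by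
  rw [lDecomp'', iota_listProd hι, List.map_ofFn, cDecompBar]
  rw [show (List.ofFn (ι ∘ fun j => lOne'' (c j)))
      = List.ofFn fun j => Complex.I • cConjOne (fun i => ((c j i : ℝ) : ℂ))
      from congrArg List.ofFn (funext fun j => iota_lOne'' hι (c j))]
  exact prod_smul_ofFn Complex.I p _

end iota2
end PosAux
/-- Proposition 2.17. A Lagerberg form `ω ∈ Λ^{p,p}V'` is a positive
Lagerberg form if and only if `ι(ω) ∈ Λ^{p,p}V*` is a positive complex form. -/
theorem positive_lagerberg_iff_positive_complex (n p : ℕ)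
    (ι : LForms n → CForms n) (hι : IsIota n ι)
    (ω : LForms n) (hω : ω ∈ LFormsPQ n p p) :
    ω ∈ lPos n p ↔ ι ω ∈ cPos n p := by
  constructor
  · rintro ⟨m, t, y, ht, hy, rfl⟩
    refine ⟨m, t, fun k => ι (y k), ht, ?_, ?_⟩
    · intro k
      obtain ⟨M, c, hc⟩ := hy k
      refine ⟨M, fun l j i => ((c l j i : ℝ) : ℂ), ?_⟩
      show ι (y k) = Complex.I ^ p ^ 2 •
        ((∑ l, cDecomp (fun j i => ((c l j i : ℝ) : ℂ)))
          * ∑ l, cDecompBar (fun j i => ((c l j i : ℝ) : ℂ)))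
      rw [hc, hι.map_smul, hι.map_mul, PosAux.iota_sum hι, PosAux.iota_sum hι]
      rw [Finset.sum_congr rfl (fun l (_ : l ∈ Finset.univ) => PosAux.iota_lDecomp hι (c l)),
        Finset.sum_congr rfl (fun l (_ : l ∈ Finset.univ) => PosAux.iota_lDecomp'' hι (c l)),
        ← Finset.smul_sum, mul_smul_comm, smul_smul, PosAux.sign2 p]
    · rw [PosAux.iota_sum hι]
      exact Finset.sum_congr rfl fun k _ => hι.map_smul (t k) (y k)
  · rintro ⟨m, t, y, ht, hy, hsum⟩
    have h1 : PosAux.rmap n (PosAux.Psi n (ι ω)) = ω := by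
      rw [PosAux.psi_iota hι, Algebra.TensorProduct.includeRight_apply, PosAux.rmap_one_tmul]
    have h2 : ω = ∑ k, t k • PosAux.rmap n (PosAux.Psi n (y k)) := by
      rw [← h1, hsum, map_sum, map_sum]
      refine Finset.sum_congr rfl fun k _ => ?_
      rw [map_smul, ← Complex.coe_algebraMap, algebraMap_smul, LinearMap.map_smul]
    rw [h2]
    exact PosAux.lCone_sum fun k => PosAux.lCone_smul (ht k) (PosAux.rmap_Psi_posGen (hy k))
end
end
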